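/- arXiv:2004.07128 — 9 statements merged into one kernel-verified Lean document; each statement's English description precedes it below -/
import Mathlib

section
/- For the ECA rule 200, with local rule h(a,b,c) = b ∧ (a ∨ c), and for every n ≥ 1: every block-sequential update schedule τ yields the synchronous dynamics, i.e. f^{(τ)} = f. Consequently rule 200 has exactly one dynamics over all block-sequential update schedules. -/
/-- One round of a block-sequential update: all cells of rank `k` are updated
simultaneously by the ECA local rule `h`, reading the current states. -/
def ecaStep (n : ℕ) (h : Bool → Bool → Bool → Bool) (τ : ZMod n → ℕ) (k : ℕ)
    (x : ZMod n → Bool) : ZMod n → Bool :=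
  fun i => if τ i = k then h (x (i - 1)) (x i) (x (i + 1)) else x i

/-- State after processing ranks `0, 1, …, k` in increasing order. -/
def ecaUpTo (n : ℕ) (h : Bool → Bool → Bool → Bool) (τ : ZMod n → ℕ) :
    ℕ → (ZMod n → Bool) → ZMod n → Bool
  | 0 => ecaStep n h τ 0
  | k + 1 => fun x => ecaStep n h τ (k + 1) (ecaUpTo n h τ k x)

/-- Asynchronous global function `f^{(τ)}` for the block-sequential update
schedule `τ : ZMod n → ℕ` (rank of each cell): a cell keeps the value it gets
in the round where it is updated (it is never updated again afterwards). -/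
def ecaAsync (n : ℕ) (h : Bool → Bool → Bool → Bool) (τ : ZMod n → ℕ)
    (x : ZMod n → Bool) : ZMod n → Bool :=
  fun i => ecaUpTo n h τ (τ i) x i

/-- Synchronous global function of the ECA with local rule `h`. -/
def ecaSync (n : ℕ) (h : Bool → Bool → Bool → Bool) (x : ZMod n → Bool) :
    ZMod n → Bool :=
  fun i => h (x (i - 1)) (x i) (x (i + 1))

/-- Label of the arc `(i, j)` for schedule `τ`:
`true` = ⊕ (τ i ≥ τ j), `false` = ⊖ (τ i < τ j). -/
def lab (n : ℕ) (τ : ZMod n → ℕ) (i j : ZMod n) : Bool :=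
  decide (τ j ≤ τ i)

theorem rule200_upTo (n : ℕ) (τ : ZMod n → ℕ) (k : ℕ) (x : ZMod n → Bool) (i : ZMod n) :
    ecaUpTo n (fun a b c => b && (a || c)) τ k x i
      = if τ i ≤ k then x i && (x (i-1) || x (i+1)) else x i := by
  induction k generalizing i with
  | zero =>
    simp [ecaUpTo, ecaStep, Nat.le_zero]
  | succ k ih =>
    show (if τ i = k + 1 then _ else _) = _
    by_cases h1 : τ i = k + 1
    · rw [if_pos h1, if_pos (by omega : τ i ≤ k + 1)]
      rw [ih i, if_neg (by omega)]
      rw [ih (i-1), ih (i+1)]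
      have e1 : i - 1 + 1 = i := by ring
      have e2 : i + 1 - 1 = i := by ring
      rw [e1, e2]
      cases hxi : x i
      · simp
      · simp only [Bool.true_and]
        split <;> split <;> simp [hxi]
    · rw [if_neg h1, ih i]
      have h2 : (τ i ≤ k + 1) ↔ (τ i ≤ k) := by omega
      simp [h2]

/-- Rule 200 (h a b c = b ∧ (a ∨ c)): every block-sequential update schedule
yields the synchronous dynamics; consequently there is exactly one dynamics. -/
theorem rule_200_insensitive (n : ℕ) (hn : 1 ≤ n) :
    (∀ τ : ZMod n → ℕ,
      ecaAsync n (fun a b c => b && (a || c)) τ = ecaSync n (fun a b c => b && (a || c))) ∧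
    {g | ∃ τ : ZMod n → ℕ, g = ecaAsync n (fun a b c => b && (a || c)) τ}.ncard = 1 := by
  have key : ∀ τ : ZMod n → ℕ,
      ecaAsync n (fun a b c => b && (a || c)) τ = ecaSync n (fun a b c => b && (a || c)) := by
    intro τ
    funext x i
    simp [ecaAsync, ecaSync, rule200_upTo]
  refine ⟨key, ?_⟩
  have hset : {g | ∃ τ : ZMod n → ℕ, g = ecaAsync n (fun a b c => b && (a || c)) τ}
      = {ecaSync n (fun a b c => b && (a || c))} := by
    ext g
    constructor
    · rintro ⟨τ, rfl⟩
      simp [key τ]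
    · rintro rfl
      exact ⟨fun _ => 0, (key _).symm⟩
  rw [hset, Set.ncard_singleton]
end

section
/- For the ECA rule 170, with local rule h(a,b,c) = c, and for every n ≥ 2: the number of distinct asynchronous global functions, i.e. the cardinality of the set { f^{(τ)} : τ a block-sequential update schedule on ℤ/nℤ }, equals 2^n − 1. -/
section Aux

variable (n : ℕ)

open Classical in
noncomputable def shiftLen (d : ZMod n → Bool) (i : ZMod n) : ℕ :=
  if h : ∃ t : ℕ, d (i + (t : ZMod n)) = false then Nat.find h + 1 else 0

noncomputable def Fd (d : ZMod n → Bool) (x : ZMod n → Bool) (i : ZMod n) : Bool :=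
  x (i + (shiftLen n d i : ZMod n))

lemma exists_shift [NeZero n] (d : ZMod n → Bool) (hd : ∃ j, d j = false) (i : ZMod n) :
    ∃ t : ℕ, d (i + (t : ZMod n)) = false := by
  obtain ⟨j, hj⟩ := hd
  refine ⟨(j - i).val, ?_⟩
  have h1 : (((j - i).val : ℕ) : ZMod n) = j - i := by
    rw [ZMod.natCast_val, ZMod.cast_id]
  rw [h1]
  have : i + (j - i) = j := by ring
  rw [this]; exact hj

lemma shiftLen_of_false (d : ZMod n → Bool) (i : ZMod n) (hi : d i = false) :
    shiftLen n d i = 1 := by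
  have hex : ∃ t : ℕ, d (i + (t : ZMod n)) = false := ⟨0, by simpa using hi⟩
  rw [shiftLen, dif_pos hex]
  have : Nat.find hex = 0 := (Nat.find_eq_zero hex).mpr (by simpa using hi)
  omega

lemma shiftLen_pos [NeZero n] (d : ZMod n → Bool) (hd : ∃ j, d j = false) (i : ZMod n) :
    1 ≤ shiftLen n d i := by
  rw [shiftLen, dif_pos (exists_shift n d hd i)]
  omega

lemma shiftLen_of_true [NeZero n] (d : ZMod n → Bool) (hd : ∃ j, d j = false) (i : ZMod n)
    (hi : d i = true) : shiftLen n d i = shiftLen n d (i + 1) + 1 := by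
  have hex := exists_shift n d hd i
  have hex' := exists_shift n d hd (i + 1)
  rw [shiftLen, dif_pos hex, shiftLen, dif_pos hex']
  suffices h : Nat.find hex = Nat.find hex' + 1 by omega
  rw [Nat.find_eq_iff]
  constructor
  · have hs := Nat.find_spec hex'
    have : i + ((Nat.find hex' + 1 : ℕ) : ZMod n) = (i + 1) + (Nat.find hex' : ZMod n) := by
      push_cast; ring
    rw [this]; exact hs
  · intro k hk
    match k with
    | 0 => simpa using hi
    | t + 1 =>
      have ht : t < Nat.find hex' := by omega
      have := Nat.find_min hex' ht
      have hcast : i + ((t + 1 : ℕ) : ZMod n) = (i + 1) + (t : ZMod n) := by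
        push_cast; ring
      rw [hcast]; exact this

lemma shiftLen_le [NeZero n] (d : ZMod n → Bool) (hd : ∃ j, d j = false) (i : ZMod n) :
    shiftLen n d i ≤ n := by
  obtain ⟨j, hj⟩ := hd
  have hex := exists_shift n d ⟨j, hj⟩ i
  rw [shiftLen, dif_pos hex]
  have h1 : Nat.find hex ≤ (j - i).val := by
    apply Nat.find_min'
    have h1 : (((j - i).val : ℕ) : ZMod n) = j - i := by
      rw [ZMod.natCast_val, ZMod.cast_id]
    rw [h1]
    have : i + (j - i) = j := by ring
    rw [this]; exact hj
  have := ZMod.val_lt (j - i)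
  omega

lemma d_eq_decide [NeZero n] (d : ZMod n → Bool) (hd : ∃ j, d j = false) (i : ZMod n) :
    d i = decide (2 ≤ shiftLen n d i) := by
  cases hdi : d i
  · rw [shiftLen_of_false n d i hdi]; simp
  · rw [shiftLen_of_true n d hd i hdi]
    have := shiftLen_pos n d hd (i + 1)
    simp; omega

lemma upTo_lt (τ : ZMod n → ℕ) (x : ZMod n → Bool) :
    ∀ k (j : ZMod n), k < τ j → ecaUpTo n (fun _ _ c => c) τ k x j = x j := by
  intro k
  induction k with
  | zero =>
    intro j hj
    show (if τ j = 0 then x (j + 1) else x j) = x j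
    rw [if_neg (by omega)]
  | succ k ih =>
    intro j hj
    show (if τ j = k + 1 then (ecaUpTo n (fun _ _ c => c) τ k x) (j + 1)
      else (ecaUpTo n (fun _ _ c => c) τ k x) j) = x j
    rw [if_neg (by omega)]
    exact ih j (by omega)

lemma upTo_ge (τ : ZMod n → ℕ) (x : ZMod n → Bool) :
    ∀ k (j : ZMod n), τ j ≤ k →
      ecaUpTo n (fun _ _ c => c) τ k x j = ecaUpTo n (fun _ _ c => c) τ (τ j) x j := by
  intro k
  induction k with
  | zero =>
    intro j hj
    have : τ j = 0 := by omega
    rw [this]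
  | succ k ih =>
    intro j hj
    by_cases h : τ j = k + 1
    · rw [h]
    · show (if τ j = k + 1 then (ecaUpTo n (fun _ _ c => c) τ k x) (j + 1)
        else (ecaUpTo n (fun _ _ c => c) τ k x) j) = _
      rw [if_neg h]
      exact ih j (by omega)

lemma dtau_exists [NeZero n] (τ : ZMod n → ℕ) :
    ∃ j : ZMod n, decide (τ (j + 1) < τ j) = false := by
  by_contra hc
  push_neg at hc
  have hall : ∀ j : ZMod n, τ (j + 1) < τ j := by
    intro j
    have := hc j
    simpa using this
  have key : ∀ t : ℕ, τ ((0 : ZMod n) + (t : ZMod n)) + t ≤ τ 0 := by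
    intro t
    induction t with
    | zero => simp
    | succ t ih =>
      have h1 := hall ((0 : ZMod n) + (t : ZMod n))
      have h2 : ((0 : ZMod n) + ((t + 1 : ℕ) : ZMod n)) = ((0 : ZMod n) + (t : ZMod n)) + 1 := by
        push_cast; ring
      rw [h2]; omega
  have := key (τ 0 + 1)
  omega

lemma async_eq [NeZero n] (τ : ZMod n → ℕ) :
    ecaAsync n (fun _ _ c => c) τ = Fd n (fun i => decide (τ (i + 1) < τ i)) := by
  have hd : ∃ j : ZMod n, (fun i => decide (τ (i + 1) < τ i)) j = false := dtau_exists n τ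
  funext x i
  set d := fun i : ZMod n => decide (τ (i + 1) < τ i) with hdd
  have H : ∀ m, ∀ i : ZMod n, τ i = m →
      ecaUpTo n (fun _ _ c => c) τ m x i = x (i + (shiftLen n d i : ZMod n)) := by
    intro m
    induction m using Nat.strong_induction_on with
    | _ m ih =>
      intro i him
      match m with
      | 0 =>
        show (if τ i = 0 then x (i + 1) else x i) = _
        rw [if_pos him]
        have hdi : d i = false := by simp [hdd]; omega
        rw [shiftLen_of_false n d i hdi]
        norm_num
      | m + 1 =>
        show (if τ i = m + 1 then (ecaUpTo n (fun _ _ c => c) τ m x) (i + 1)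
          else (ecaUpTo n (fun _ _ c => c) τ m x) i) = _
        rw [if_pos him]
        by_cases hlt : τ (i + 1) < τ i
        · have h2 : τ (i + 1) ≤ m := by omega
          rw [upTo_ge n τ x m (i + 1) h2]
          rw [ih (τ (i + 1)) (by omega) (i + 1) rfl]
          have hdi : d i = true := by simp [hdd]; omega
          rw [shiftLen_of_true n d hd i hdi]
          congr 1
          push_cast; ring
        · have h2 : m < τ (i + 1) := by omega
          rw [upTo_lt n τ x m (i + 1) h2]
          have hdi : d i = false := by simp [hdd]; omega
          rw [shiftLen_of_false n d i hdi]
          norm_num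
  show ecaUpTo n (fun _ _ c => c) τ (τ i) x i = _
  rw [H (τ i) i rfl]
  rfl

lemma shift_sched [NeZero n] (d : ZMod n → Bool) (hd : ∃ j, d j = false) :
    (fun i : ZMod n => decide (shiftLen n d (i + 1) < shiftLen n d i)) = d := by
  funext i
  cases hdi : d i
  · rw [shiftLen_of_false n d i hdi]
    have := shiftLen_pos n d hd (i + 1)
    simp; omega
  · rw [shiftLen_of_true n d hd i hdi]
    simp

lemma cast_nat_inj [NeZero n] (a b : ℕ) (ha1 : 1 ≤ a) (ha2 : a ≤ n) (hb1 : 1 ≤ b)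
    (hb2 : b ≤ n) (h : (a : ZMod n) = (b : ZMod n)) : a = b := by
  have h1 : ((a - 1 : ℕ) : ZMod n) = ((b - 1 : ℕ) : ZMod n) := by
    have ha : ((a - 1 : ℕ) : ZMod n) = (a : ZMod n) - 1 := by
      push_cast [Nat.cast_sub ha1]; ring
    have hb : ((b - 1 : ℕ) : ZMod n) = (b : ZMod n) - 1 := by
      push_cast [Nat.cast_sub hb1]; ring
    rw [ha, hb, h]
  have h2 := congrArg ZMod.val h1
  rw [ZMod.val_cast_of_lt (by omega), ZMod.val_cast_of_lt (by omega)] at h2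
  omega

lemma Fd_injOn [NeZero n] : Set.InjOn (Fd n) {d : ZMod n → Bool | ∃ j, d j = false} := by
  intro d hd d' hd' h
  have hs : ∀ i : ZMod n, shiftLen n d i = shiftLen n d' i := by
    intro i
    have h3 : i + (shiftLen n d' i : ZMod n) = i + (shiftLen n d i : ZMod n) := by
      have h1 := congrFun (congrFun h.symm (fun j => decide (j = i + (shiftLen n d i : ZMod n)))) i
      simpa [Fd] using h1
    have h4 : (shiftLen n d' i : ZMod n) = (shiftLen n d i : ZMod n) := by
      exact add_left_cancel h3
    exact (cast_nat_inj n _ _ (shiftLen_pos n d hd i) (shiftLen_le n d hd i)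
      (shiftLen_pos n d' hd' i) (shiftLen_le n d' hd' i) h4.symm)
  funext i
  rw [d_eq_decide n d hd i, d_eq_decide n d' hd' i, hs i]

end Aux


/-- Rule 170 (h a b c = c): the number of distinct asynchronous global
functions equals $2^n - 1$. -/
theorem rule_170_count (n : ℕ) (hn : 2 ≤ n) :
    {g | ∃ τ : ZMod n → ℕ, g = ecaAsync n (fun _ _ c => c) τ}.ncard = 2 ^ n - 1 := by
  haveI : NeZero n := ⟨by omega⟩
  have hset : {g | ∃ τ : ZMod n → ℕ, g = ecaAsync n (fun _ _ c => c) τ}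
      = Fd n '' {d : ZMod n → Bool | ∃ j, d j = false} := by
    ext g
    constructor
    · rintro ⟨τ, rfl⟩
      exact ⟨fun i => decide (τ (i + 1) < τ i), dtau_exists n τ, (async_eq n τ).symm⟩
    · rintro ⟨d, hd, rfl⟩
      refine ⟨shiftLen n d, ?_⟩
      rw [async_eq n (shiftLen n d), shift_sched n d hd]
  rw [hset, Set.ncard_image_of_injOn (Fd_injOn n)]
  have hDeq : {d : ZMod n → Bool | ∃ j, d j = false}
      = Set.univ \ {fun _ => true} := by
    ext d
    simp only [Set.mem_setOf_eq, Set.mem_diff, Set.mem_univ, true_and, Set.mem_singleton_iff,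
      funext_iff]
    push_neg
    constructor
    · rintro ⟨j, hj⟩; exact ⟨j, by simp [hj]⟩
    · rintro ⟨j, hj⟩; exact ⟨j, by simpa using hj⟩
  rw [hDeq, Set.ncard_diff (Set.subset_univ _)]
  rw [Set.ncard_univ, Set.ncard_singleton]
  rw [Nat.card_eq_fintype_card, Fintype.card_fun, ZMod.card, Fintype.card_bool]
end

section
/- For the ECA rule 32, with local rule h(a,b,c) = a ∧ ¬b ∧ c, and for every n ≥ 3: for every block-sequential update schedule τ, every configuration x and every cell i ∈ ℤ/nℤ, one has f^{(τ)}(x)_i = true if and only if lab_τ((i+1,i)) = ⊕ and lab_τ((i−1,i)) = ⊕ and (x_{i−1}, x_i, x_{i+1}) = (true, false, true). -/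
lemma eca_notUpdated (n : ℕ) (h : Bool → Bool → Bool → Bool) (τ : ZMod n → ℕ)
    (x : ZMod n → Bool) (j : ZMod n) :
    ∀ k, k < τ j → ecaUpTo n h τ k x j = x j := by
  intro k
  induction k with
  | zero =>
    intro hk
    have h1 : τ j ≠ 0 := by omega
    simp [ecaUpTo, ecaStep, h1]
  | succ k ih =>
    intro hk
    have h1 : τ j ≠ k + 1 := by omega
    have h2 : k < τ j := by omega
    simp [ecaUpTo, ecaStep, h1, ih h2]

lemma eca_stable (n : ℕ) (h : Bool → Bool → Bool → Bool) (τ : ZMod n → ℕ)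
    (x : ZMod n → Bool) (j : ZMod n) :
    ∀ k, τ j ≤ k → ecaUpTo n h τ k x j = ecaUpTo n h τ (τ j) x j := by
  intro k
  induction k with
  | zero => intro hk; rw [Nat.le_zero.mp hk]
  | succ k ih =>
    intro hk
    rcases eq_or_lt_of_le hk with he | hl
    · rw [he]
    · have h1 : τ j ≠ k + 1 := by omega
      have h2 : τ j ≤ k := by omega
      show ecaStep n h τ (k+1) (ecaUpTo n h τ k x) j = _
      simp [ecaStep, h1, ih h2]

lemma eca32_rightNbr (n : ℕ) (τ : ZMod n → ℕ) (x : ZMod n → Bool) (j : ZMod n)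
    (hτ : τ j < τ (j + 1))
    (ht : ecaUpTo n (fun a b c => a && !b && c) τ (τ j) x j = true) :
    x (j + 1) = true := by
  cases hc : τ j with
  | zero =>
    rw [hc] at ht
    simp [ecaUpTo, ecaStep, hc] at ht
    exact ht.2
  | succ k =>
    rw [hc] at ht
    have hy : ecaUpTo n (fun a b c => a && !b && c) τ k x (j + 1) = x (j + 1) :=
      eca_notUpdated n _ τ x (j + 1) k (by omega)
    simp only [ecaUpTo, ecaStep, hc, if_pos rfl] at ht
    rw [hy] at ht
    simp at ht
    exact ht.2

lemma eca32_leftNbr (n : ℕ) (τ : ZMod n → ℕ) (x : ZMod n → Bool) (j : ZMod n)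
    (hτ : τ j < τ (j - 1))
    (ht : ecaUpTo n (fun a b c => a && !b && c) τ (τ j) x j = true) :
    x (j - 1) = true := by
  cases hc : τ j with
  | zero =>
    rw [hc] at ht
    simp [ecaUpTo, ecaStep, hc] at ht
    exact ht.1.1
  | succ k =>
    rw [hc] at ht
    have hy : ecaUpTo n (fun a b c => a && !b && c) τ k x (j - 1) = x (j - 1) :=
      eca_notUpdated n _ τ x (j - 1) k (by omega)
    simp only [ecaUpTo, ecaStep, hc, if_pos rfl] at ht
    rw [hy] at ht
    simp at ht
    exact ht.1.1

/-- Rule 32 (h a b c = a ∧ ¬b ∧ c): characterization of when a cell is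
updated to  under any block-sequential schedule. -/
theorem rule_32_characterization (n : ℕ) (hn : 3 ≤ n) (τ : ZMod n → ℕ)
    (x : ZMod n → Bool) (i : ZMod n) :
    ecaAsync n (fun a b c => a && !b && c) τ x i = true ↔
      (lab n τ (i + 1) i = true ∧ lab n τ (i - 1) i = true ∧
        x (i - 1) = true ∧ x i = false ∧ x (i + 1) = true) := by
  have hsub : i + 1 - 1 = i := by ring
  have hadd : i - 1 + 1 = i := by ring
  unfold ecaAsync lab
  cases hc : τ i with
  | zero =>
    simp [hc, ecaUpTo, ecaStep, and_assoc]
  | succ k =>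
    have hyi : ecaUpTo n (fun a b c => a && !b && c) τ k x i = x i :=
      eca_notUpdated n _ τ x i k (by omega)
    simp only [hc, ecaUpTo, ecaStep, if_pos rfl, hyi]
    by_cases hL : k + 1 ≤ τ (i - 1)
    · by_cases hR : k + 1 ≤ τ (i + 1)
      · have hy1 : ecaUpTo n (fun a b c => a && !b && c) τ k x (i - 1) = x (i - 1) :=
          eca_notUpdated n _ τ x (i - 1) k (by omega)
        have hy2 : ecaUpTo n (fun a b c => a && !b && c) τ k x (i + 1) = x (i + 1) :=
          eca_notUpdated n _ τ x (i + 1) k (by omega)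
        rw [hy1, hy2]
        simp [hL, hR, and_assoc]
      · -- right neighbour updated earlier
        have hR' : τ (i + 1) ≤ k := by omega
        constructor
        · intro ht
          exfalso
          simp at ht
          have hst : ecaUpTo n (fun a b c => a && !b && c) τ k x (i + 1)
              = ecaUpTo n (fun a b c => a && !b && c) τ (τ (i + 1)) x (i + 1) :=
            eca_stable n _ τ x (i + 1) k hR'
          have hxi := eca32_leftNbr n τ x (i + 1) (by rw [hsub]; omega)
            (by rw [← hst]; exact ht.2)
          rw [hsub, ht.1.2] at hxi
          exact Bool.false_ne_true hxi
        · intro hconj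
          have := hconj.1
          simp at this
          omega
    · -- left neighbour updated earlier
      have hL' : τ (i - 1) ≤ k := by omega
      constructor
      · intro ht
        exfalso
        simp at ht
        have hst : ecaUpTo n (fun a b c => a && !b && c) τ k x (i - 1)
            = ecaUpTo n (fun a b c => a && !b && c) τ (τ (i - 1)) x (i - 1) :=
          eca_stable n _ τ x (i - 1) k hL'
        have hxi := eca32_rightNbr n τ x (i - 1) (by rw [hadd]; omega)
          (by rw [← hst]; exact ht.1.1)
        rw [hadd, ht.1.2] at hxi
        exact Bool.false_ne_true hxi
      · intro hconj
        have := hconj.2.1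
        simp at this
        omega
end

section
/- For the ECA rule 140, with local rule h(a,b,c) = b ∧ (¬a ∨ c), and for every n > 3: for all block-sequential update schedules τ and τ', the asynchronous global functions differ, f^{(τ)} ≠ f^{(τ')}, if and only if there exists a cell i ∈ ℤ/nℤ with lab_τ((i+1,i)) ≠ lab_τ'((i+1,i)). -/
section aux
variable {n : ℕ} (h : Bool → Bool → Bool → Bool) (τ : ZMod n → ℕ) (x : ZMod n → Bool)

lemma upTo_untouched : ∀ k, ∀ j : ZMod n, k < τ j → ecaUpTo n h τ k x j = x j := by
  intro k
  induction k with
  | zero => intro j hj; simp [ecaUpTo, ecaStep, hj.ne']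
  | succ k ih =>
    intro j hj
    simp only [ecaUpTo, ecaStep]
    rw [if_neg hj.ne']
    exact ih j (Nat.lt_of_succ_lt hj)

lemma upTo_frozen : ∀ k, ∀ j : ZMod n, τ j ≤ k →
    ecaUpTo n h τ k x j = ecaAsync n h τ x j := by
  intro k
  induction k with
  | zero => intro j hj; rw [ecaAsync, Nat.le_zero.mp hj]
  | succ k ih =>
    intro j hj
    rcases Nat.lt_or_ge (τ j) (k + 1) with h1 | h1
    · simp only [ecaUpTo, ecaStep]
      rw [if_neg h1.ne]
      exact ih j (Nat.lt_succ_iff.mp h1)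
    · have he : τ j = k + 1 := le_antisymm hj h1
      rw [ecaAsync, he]

lemma async_rec (i : ZMod n) :
    ecaAsync n h τ x i =
      h (if τ (i - 1) < τ i then ecaAsync n h τ x (i - 1) else x (i - 1))
        (x i)
        (if τ (i + 1) < τ i then ecaAsync n h τ x (i + 1) else x (i + 1)) := by
  by_cases hk0 : τ i = 0
  · have h0 : ecaAsync n h τ x i = ecaStep n h τ 0 x i := by rw [ecaAsync, hk0]; rfl
    rw [h0, ecaStep, if_pos hk0,
      if_neg (by omega : ¬ τ (i - 1) < τ i), if_neg (by omega : ¬ τ (i + 1) < τ i)]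
  · obtain ⟨k, hk⟩ := Nat.exists_eq_succ_of_ne_zero hk0
    have nb : ∀ j : ZMod n,
        ecaUpTo n h τ k x j = if τ j < τ i then ecaAsync n h τ x j else x j := by
      intro j
      by_cases hj : τ j < τ i
      · rw [if_pos hj]
        exact upTo_frozen h τ x k j (by omega)
      · rw [if_neg hj]
        exact upTo_untouched h τ x k j (by omega)
    have h0 : ecaAsync n h τ x i = ecaStep n h τ (k + 1) (ecaUpTo n h τ k x) i := by
      rw [ecaAsync, hk]; rfl
    rw [h0, ecaStep, if_pos hk, nb (i - 1), nb (i + 1),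
      upTo_untouched h τ x k i (by omega)]

end aux

section rule140
variable {n : ℕ}

def h140 : Bool → Bool → Bool → Bool := fun a b c => b && (!a || c)

lemma async_false (τ : ZMod n → ℕ) (x : ZMod n → Bool) (i : ZMod n) (hx : x i = false) :
    ecaAsync n h140 τ x i = false := by
  rw [async_rec h140 τ x i, hx]
  rfl

lemma async_closed (τ : ZMod n → ℕ) (x : ZMod n → Bool) (i : ZMod n) :
    ecaAsync n h140 τ x i =
      (x i && (!x (i - 1) ||
        (if τ (i + 1) < τ i then ecaAsync n h140 τ x (i + 1) else x (i + 1)))) := by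
  rw [async_rec h140 τ x i]
  by_cases hl : τ (i - 1) < τ i
  · rw [if_pos hl]
    cases hx : x i with
    | false => simp [h140]
    | true =>
      rw [async_rec h140 τ x (i - 1), show i - 1 + 1 = i from by ring,
        if_neg (Nat.lt_asymm hl), hx]
      simp [h140]
  · rw [if_neg hl]
    rfl

end rule140

/-- Rule 140 (h a b c = b ∧ (¬a ∨ c)): two schedules give different dynamics
iff they differ on the label of some arc $(i+1,i)$. -/
theorem rule_140_dynamics_differ_iff (n : ℕ) (hn : 3 < n) (τ τ' : ZMod n → ℕ) :
    ecaAsync n (fun a b c => b && (!a || c)) τ ≠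
      ecaAsync n (fun a b c => b && (!a || c)) τ' ↔
    ∃ i : ZMod n, lab n τ (i + 1) i ≠ lab n τ' (i + 1) i := by
  have hF : (fun a b c => b && (!a || c)) = h140 := rfl
  rw [hF]
  haveI : NeZero n := ⟨by omega⟩
  have hcast : ∀ k : ℕ, 0 < k → k ≤ 3 → ((k : ℕ) : ZMod n) ≠ 0 := by
    intro k hk1 hk2
    rw [Ne, ZMod.natCast_eq_zero_iff]
    intro hd
    exact absurd (Nat.le_of_dvd hk1 hd) (by omega)
  have hone : (1 : ZMod n) ≠ 0 := by simpa using hcast 1 (by norm_num) (by norm_num)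
  have htwo : (2 : ZMod n) ≠ 0 := by simpa using hcast 2 (by norm_num) (by norm_num)
  have hthree : (3 : ZMod n) ≠ 0 := by simpa using hcast 3 (by norm_num) (by norm_num)
  constructor
  · -- contrapositive: equal labels ⇒ equal dynamics
    intro hne
    by_contra hno
    push_neg at hno
    apply hne
    funext x i
    have hlab : ∀ i : ZMod n, (τ (i + 1) < τ i ↔ τ' (i + 1) < τ' i) := by
      intro i
      have := hno i
      rw [lab, lab, decide_eq_decide] at this
      omega
    have key : ∀ m, ∀ i : ZMod n, τ i = m →
        ecaAsync n h140 τ x i = ecaAsync n h140 τ' x i := by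
      intro m
      induction m using Nat.strong_induction_on with
      | _ m ih =>
        intro i hm
        rw [async_closed τ x i, async_closed τ' x i]
        by_cases hc : τ (i + 1) < τ i
        · rw [if_pos hc, if_pos ((hlab i).mp hc),
            ih (τ (i + 1)) (by omega) (i + 1) rfl]
        · rw [if_neg hc, if_neg (fun hh => hc ((hlab i).mpr hh))]
    exact key (τ i) i rfl
  · rintro ⟨i, hi⟩
    have core : ∀ σ σ' : ZMod n → ℕ, ¬ σ (i + 1) < σ i → σ' (i + 1) < σ' i →
        ecaAsync n h140 σ ≠ ecaAsync n h140 σ' := by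
      intro σ σ' hs hs' heq
      set x : ZMod n → Bool :=
        fun j => decide (j = i - 1) || decide (j = i) || decide (j = i + 1) with hxdef
      have hx1 : x (i - 1) = true := by simp [hxdef]
      have hx2 : x i = true := by simp [hxdef]
      have hx3 : x (i + 1) = true := by simp [hxdef]
      have hx4 : x (i + 2) = false := by
        have e1 : i + 2 ≠ i - 1 := fun hh => hthree (by linear_combination hh)
        have e2 : i + 2 ≠ i := fun hh => htwo (by linear_combination hh)
        have e3 : i + 2 ≠ i + 1 := fun hh => hone (by linear_combination hh)
        simp [hxdef, e1, e2, e3]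
      have hσ : ecaAsync n h140 σ x i = true := by
        rw [async_closed σ x i, if_neg hs, hx1, hx2, hx3]
        rfl
      have hσ' : ecaAsync n h140 σ' x i = false := by
        have hstep : ecaAsync n h140 σ' x (i + 1) = false := by
          rw [async_closed σ' x (i + 1), show i + 1 - 1 = i from by ring,
            show i + 1 + 1 = i + 2 from by ring, hx2, hx3]
          by_cases hc : σ' (i + 2) < σ' (i + 1)
          · rw [if_pos hc, async_false σ' x (i + 2) hx4]
            rfl
          · rw [if_neg hc, hx4]
            rfl
        rw [async_closed σ' x i, if_pos hs', hstep, hx1, hx2]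
        rfl
      rw [heq, hσ'] at hσ
      exact Bool.false_ne_true hσ
    rw [lab, lab, Ne, decide_eq_decide, not_iff] at hi
    by_cases hτ : τ i ≤ τ (i + 1)
    · have hB : ¬ τ' i ≤ τ' (i + 1) := fun hB => (hi.mpr hB) hτ
      exact core τ τ' (by omega) (by omega)
    · have hB : τ' i ≤ τ' (i + 1) := hi.mp hτ
      exact fun heq => core τ' τ (by omega) (by omega) heq.symm
end

section
/- For every n > 3 and for each of the four ECA local rules h(a,b,c) = (¬a ∧ b) ∨ (a ∧ ¬b ∧ ¬c) (rule 28), h(a,b,c) = a ∧ ¬b ∧ c (rule 32), h(a,b,c) = (¬a ∧ b) ∨ (a ∧ ¬b ∧ c) (rule 44), and h(a,b,c) = b ∧ (¬a ∨ c) (rule 140): the number of distinct asynchronous global functions, i.e. the cardinality of { f^{(τ)} : τ a block-sequential update schedule on ℤ/nℤ }, equals 2^n − 1. -/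
namespace ECAAux

variable {n : ℕ}

lemma ecaUpTo_apply (h : Bool → Bool → Bool → Bool) (τ : ZMod n → ℕ) :
    ∀ (k : ℕ) (x : ZMod n → Bool) (j : ZMod n),
      ecaUpTo n h τ k x j = if τ j ≤ k then ecaAsync n h τ x j else x j := by
  intro k
  induction k with
  | zero =>
    intro x j
    by_cases h0 : τ j = 0
    · rw [if_pos (by omega)]
      show ecaUpTo n h τ 0 x j = ecaUpTo n h τ (τ j) x j
      rw [h0]
    · rw [if_neg (by omega)]
      show ecaStep n h τ 0 x j = x j
      simp [ecaStep, h0]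
  | succ k ih =>
    intro x j
    by_cases h0 : τ j = k + 1
    · rw [if_pos (by omega)]
      show ecaStep n h τ (k+1) (ecaUpTo n h τ k x) j = ecaUpTo n h τ (τ j) x j
      rw [h0]
      rfl
    · have hstep : ecaUpTo n h τ (k+1) x j = ecaUpTo n h τ k x j := by
        show ecaStep n h τ (k+1) (ecaUpTo n h τ k x) j = ecaUpTo n h τ k x j
        simp [ecaStep, h0]
      rw [hstep, ih]
      by_cases h1 : τ j ≤ k
      · rw [if_pos h1, if_pos (by omega)]
      · rw [if_neg h1, if_neg (by omega)]

lemma async_master (h : Bool → Bool → Bool → Bool) (τ : ZMod n → ℕ)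
    (x : ZMod n → Bool) (j : ZMod n) :
    ecaAsync n h τ x j =
      h (if τ (j-1) < τ j then ecaAsync n h τ x (j-1) else x (j-1)) (x j)
        (if τ (j+1) < τ j then ecaAsync n h τ x (j+1) else x (j+1)) := by
  show ecaUpTo n h τ (τ j) x j = _
  rcases hk : τ j with _ | k
  · show ecaStep n h τ 0 x j = _
    rw [ecaStep, if_pos hk]
    have h1 : ¬ τ (j-1) < 0 := by omega
    have h2 : ¬ τ (j+1) < 0 := by omega
    rw [if_neg h1, if_neg h2]
  · show ecaStep n h τ (k+1) (ecaUpTo n h τ k x) j = _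
    rw [ecaStep, if_pos hk]
    rw [ecaUpTo_apply, ecaUpTo_apply, ecaUpTo_apply]
    have hj : ¬ τ j ≤ k := by omega
    rw [if_neg hj]
    congr 1
    · exact (if_congr (by omega) rfl rfl).symm
    · exact (if_congr (by omega) rfl rfl).symm



lemma async_collapseR (h : Bool → Bool → Bool → Bool)
    (hR : ∀ a b c c₀, h a b (h b c c₀) = h a b c) (τ : ZMod n → ℕ)
    (x : ZMod n → Bool) (j : ZMod n) :
    ecaAsync n h τ x j =
      h (if τ (j-1) < τ j then ecaAsync n h τ x (j-1) else x (j-1)) (x j) (x (j+1)) := by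
  rw [async_master]
  by_cases hc : τ (j+1) < τ j
  · rw [if_pos hc, async_master h τ x (j+1)]
    have h1 : (j + 1 : ZMod n) - 1 = j := add_sub_cancel_right j 1
    rw [h1, if_neg (by omega : ¬ τ j < τ (j+1))]
    exact hR _ _ _ _
  · rw [if_neg hc]

lemma async_collapseL (h : Bool → Bool → Bool → Bool)
    (hL : ∀ a₀ a b c, h (h a₀ a b) b c = h a b c) (τ : ZMod n → ℕ)
    (x : ZMod n → Bool) (j : ZMod n) :
    ecaAsync n h τ x j =
      h (x (j-1)) (x j) (if τ (j+1) < τ j then ecaAsync n h τ x (j+1) else x (j+1)) := by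
  rw [async_master]
  by_cases hc : τ (j-1) < τ j
  · rw [if_pos hc, async_master h τ x (j-1)]
    have h1 : (j - 1 : ZMod n) + 1 = j := sub_add_cancel j 1
    rw [h1, if_neg (by omega : ¬ τ j < τ (j-1))]
    exact hL _ _ _ _
  · rw [if_neg hc]

/-- left chain -/
def goL (h : Bool → Bool → Bool → Bool) (ℓ x : ZMod n → Bool) : ℕ → ZMod n → Bool
  | 0, j => x (j - 1)
  | f+1, j => if ℓ j then h (goL h ℓ x f (j-1)) (x (j-1)) (x j) else x (j - 1)

/-- right chain -/
def goR (h : Bool → Bool → Bool → Bool) (r x : ZMod n → Bool) : ℕ → ZMod n → Bool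
  | 0, j => x (j + 1)
  | f+1, j => if r j then h (x j) (x (j+1)) (goR h r x f (j+1)) else x (j + 1)

lemma goL_succ (h : Bool → Bool → Bool → Bool) (ℓ x : ZMod n → Bool) {f : ℕ}
    (hf : 1 ≤ f) (j : ZMod n) :
    goL h ℓ x f j = if ℓ j then h (goL h ℓ x (f-1) (j-1)) (x (j-1)) (x j) else x (j - 1) := by
  obtain ⟨f', rfl⟩ : ∃ f', f = f' + 1 := ⟨f - 1, by omega⟩
  rfl

lemma goR_succ (h : Bool → Bool → Bool → Bool) (r x : ZMod n → Bool) {f : ℕ}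
    (hf : 1 ≤ f) (j : ZMod n) :
    goR h r x f j = if r j then h (x j) (x (j+1)) (goR h r x (f-1) (j+1)) else x (j + 1) := by
  obtain ⟨f', rfl⟩ : ∃ f', f = f' + 1 := ⟨f - 1, by omega⟩
  rfl

lemma goL_false (h : Bool → Bool → Bool → Bool) (ℓ x : ZMod n → Bool) (f : ℕ)
    {j : ZMod n} (hj : ℓ j = false) : goL h ℓ x f j = x (j - 1) := by
  cases f with
  | zero => rfl
  | succ f => simp [goL, hj]

lemma goR_false (h : Bool → Bool → Bool → Bool) (r x : ZMod n → Bool) (f : ℕ)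
    {j : ZMod n} (hj : r j = false) : goR h r x f j = x (j + 1) := by
  cases f with
  | zero => rfl
  | succ f => simp [goR, hj]

lemma goL_stab (h : Bool → Bool → Bool → Bool) (ℓ x : ZMod n → Bool) :
    ∀ (f : ℕ) (j : ZMod n), (∃ k ≤ f, ℓ (j - (k:ℕ)) = false) →
      ∀ g, f ≤ g → goL h ℓ x g j = goL h ℓ x f j := by
  intro f
  induction f with
  | zero =>
    rintro j ⟨k, hk0, hkf⟩ g _
    interval_cases k
    simp only [Nat.cast_zero, sub_zero] at hkf
    rw [goL_false h ℓ x g hkf, goL_false h ℓ x 0 hkf]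
  | succ f ih =>
    rintro j ⟨k, hk, hfalse⟩ g hg
    obtain ⟨g', rfl⟩ : ∃ g', g = g' + 1 := ⟨g - 1, by omega⟩
    cases hℓj : ℓ j with
    | false => rw [goL_false h ℓ x _ hℓj, goL_false h ℓ x _ hℓj]
    | true =>
      have hk0 : k ≠ 0 := by
        rintro rfl
        simp only [Nat.cast_zero, sub_zero] at hfalse
        rw [hℓj] at hfalse; exact Bool.noConfusion hfalse
      obtain ⟨k', rfl⟩ : ∃ k', k = k' + 1 := ⟨k - 1, by omega⟩
      have hf2 : ℓ (j - 1 - (k' : ℕ)) = false := by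
        have : j - ((k' + 1 : ℕ) : ZMod n) = j - 1 - (k' : ℕ) := by push_cast; ring
        rwa [this] at hfalse
      show (if ℓ j then h (goL h ℓ x g' (j-1)) (x (j-1)) (x j) else x (j - 1))
        = (if ℓ j then h (goL h ℓ x f (j-1)) (x (j-1)) (x j) else x (j - 1))
      rw [hℓj, if_pos rfl, if_pos rfl, ih (j-1) ⟨k', by omega, hf2⟩ g' (by omega)]

lemma goR_stab (h : Bool → Bool → Bool → Bool) (r x : ZMod n → Bool) :
    ∀ (f : ℕ) (j : ZMod n), (∃ k ≤ f, r (j + (k:ℕ)) = false) →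
      ∀ g, f ≤ g → goR h r x g j = goR h r x f j := by
  intro f
  induction f with
  | zero =>
    rintro j ⟨k, hk0, hkf⟩ g _
    interval_cases k
    simp only [Nat.cast_zero, add_zero] at hkf
    rw [goR_false h r x g hkf, goR_false h r x 0 hkf]
  | succ f ih =>
    rintro j ⟨k, hk, hfalse⟩ g hg
    obtain ⟨g', rfl⟩ : ∃ g', g = g' + 1 := ⟨g - 1, by omega⟩
    cases hrj : r j with
    | false => rw [goR_false h r x _ hrj, goR_false h r x _ hrj]
    | true =>
      have hk0 : k ≠ 0 := by
        rintro rfl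
        simp only [Nat.cast_zero, add_zero] at hfalse
        rw [hrj] at hfalse; exact Bool.noConfusion hfalse
      obtain ⟨k', rfl⟩ : ∃ k', k = k' + 1 := ⟨k - 1, by omega⟩
      have hf2 : r (j + 1 + (k' : ℕ)) = false := by
        have : j + ((k' + 1 : ℕ) : ZMod n) = j + 1 + (k' : ℕ) := by push_cast; ring
        rwa [this] at hfalse
      show (if r j then h (x j) (x (j+1)) (goR h r x g' (j+1)) else x (j + 1))
        = (if r j then h (x j) (x (j+1)) (goR h r x f (j+1)) else x (j + 1))
      rw [hrj, if_pos rfl, if_pos rfl, ih (j+1) ⟨k', by omega, hf2⟩ g' (by omega)]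

/-- the left labels of a schedule -/
def ellOf (τ : ZMod n → ℕ) (j : ZMod n) : Bool := decide (τ (j-1) < τ j)

/-- the right labels of a schedule -/
def rOf (τ : ZMod n → ℕ) (j : ZMod n) : Bool := decide (τ (j+1) < τ j)

lemma ellOf_feas (hn : 0 < n) (τ : ZMod n → ℕ) (j : ZMod n) :
    ∃ k < n, ellOf τ (j - (k:ℕ)) = false := by
  by_contra hcon
  push_neg at hcon
  have hall : ∀ k, k < n → τ (j - (k:ℕ) - 1) < τ (j - (k:ℕ)) := by
    intro k hk
    have := hcon k hk
    simp only [ellOf, Bool.not_eq_false, decide_eq_true_eq] at this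
    exact this
  have key : ∀ k, k ≤ n → k + τ (j - (k:ℕ)) ≤ τ j := by
    intro k
    induction k with
    | zero => intro _; simp
    | succ k ih =>
      intro hk
      have h1 := hall k (by omega)
      have h2 := ih (by omega)
      have h3 : j - ((k+1 : ℕ) : ZMod n) = j - (k:ℕ) - 1 := by push_cast; ring
      rw [h3]; omega
  have := key n le_rfl
  rw [ZMod.natCast_self, sub_zero] at this
  omega

lemma rOf_feas (hn : 0 < n) (τ : ZMod n → ℕ) (j : ZMod n) :
    ∃ k < n, rOf τ (j + (k:ℕ)) = false := by
  by_contra hcon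
  push_neg at hcon
  have hall : ∀ k, k < n → τ (j + (k:ℕ) + 1) < τ (j + (k:ℕ)) := by
    intro k hk
    have := hcon k hk
    simp only [rOf, Bool.not_eq_false, decide_eq_true_eq] at this
    exact this
  have key : ∀ k, k ≤ n → k + τ (j + (k:ℕ)) ≤ τ j := by
    intro k
    induction k with
    | zero => intro _; simp
    | succ k ih =>
      intro hk
      have h1 := hall k (by omega)
      have h2 := ih (by omega)
      have h3 : j + ((k+1 : ℕ) : ZMod n) = j + (k:ℕ) + 1 := by push_cast; ring
      rw [h3]; omega
  have := key n le_rfl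
  rw [ZMod.natCast_self, add_zero] at this
  omega



/-- closed form for left-chaining rules -/
def FL (h : Bool → Bool → Bool → Bool) (ℓ : ZMod n → Bool) :
    (ZMod n → Bool) → ZMod n → Bool :=
  fun x j => h (goL h ℓ x n j) (x j) (x (j+1))

/-- closed form for right-chaining rules -/
def FR (h : Bool → Bool → Bool → Bool) (r : ZMod n → Bool) :
    (ZMod n → Bool) → ZMod n → Bool :=
  fun x j => h (x (j-1)) (x j) (goR h r x n j)

lemma async_eq_FL (hn : 0 < n) (h : Bool → Bool → Bool → Bool)
    (hR : ∀ a b c c₀, h a b (h b c c₀) = h a b c) (τ : ZMod n → ℕ)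
    (x : ZMod n → Bool) (j : ZMod n) :
    ecaAsync n h τ x j = FL h (ellOf τ) x j := by
  have main : ∀ t (j : ZMod n), τ j ≤ t → ecaAsync n h τ x j = FL h (ellOf τ) x j := by
    intro t
    induction t with
    | zero =>
      intro j hj
      have hl : ¬ τ (j-1) < τ j := by omega
      rw [async_collapseR h hR τ x j, if_neg hl]
      unfold FL
      rw [goL_succ h _ x hn j, if_neg (by simp [ellOf, hl])]
    | succ t ih =>
      intro j hj
      rw [async_collapseR h hR τ x j]
      by_cases hl : τ (j-1) < τ j
      · rw [if_pos hl]
        have h1 := ih (j-1) (by omega)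
        have h2 : (j - 1 : ZMod n) + 1 = j := sub_add_cancel j 1
        unfold FL at h1 ⊢
        rw [h1, h2]
        rw [goL_succ h _ x hn j, if_pos (by simp [ellOf, hl])]
        congr 1
        obtain ⟨k, hk, hkf⟩ := ellOf_feas hn τ (j-1)
        rw [goL_stab h (ellOf τ) x (n-1) (j-1) ⟨k, by omega, hkf⟩ n (by omega)]
      · rw [if_neg hl]
        unfold FL
        rw [goL_succ h _ x hn j, if_neg (by simp [ellOf, hl])]
  exact main (τ j) j le_rfl

lemma async_eq_FR (hn : 0 < n) (h : Bool → Bool → Bool → Bool)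
    (hL : ∀ a₀ a b c, h (h a₀ a b) b c = h a b c) (τ : ZMod n → ℕ)
    (x : ZMod n → Bool) (j : ZMod n) :
    ecaAsync n h τ x j = FR h (rOf τ) x j := by
  have main : ∀ t (j : ZMod n), τ j ≤ t → ecaAsync n h τ x j = FR h (rOf τ) x j := by
    intro t
    induction t with
    | zero =>
      intro j hj
      have hl : ¬ τ (j+1) < τ j := by omega
      rw [async_collapseL h hL τ x j, if_neg hl]
      unfold FR
      rw [goR_succ h _ x hn j, if_neg (by simp [rOf, hl])]
    | succ t ih =>
      intro j hj
      rw [async_collapseL h hL τ x j]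
      by_cases hl : τ (j+1) < τ j
      · rw [if_pos hl]
        have h1 := ih (j+1) (by omega)
        have h2 : (j + 1 : ZMod n) - 1 = j := add_sub_cancel_right j 1
        unfold FR at h1 ⊢
        rw [h1, h2]
        rw [goR_succ h _ x hn j, if_pos (by simp [rOf, hl])]
        congr 1
        obtain ⟨k, hk, hkf⟩ := rOf_feas hn τ (j+1)
        rw [goR_stab h (rOf τ) x (n-1) (j+1) ⟨k, by omega, hkf⟩ n (by omega)]
      · rw [if_neg hl]
        unfold FR
        rw [goR_succ h _ x hn j, if_neg (by simp [rOf, hl])]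
  exact main (τ j) j le_rfl



def mkTauL (ℓ : ZMod n → Bool) (j0 : ZMod n) : ℕ → ℕ
  | 0 => 0
  | k+1 => if ℓ (j0 + ((k+1 : ℕ) : ZMod n)) then mkTauL ℓ j0 k + 1 else 0

def mkTauR (r : ZMod n → Bool) (j0 : ZMod n) : ℕ → ℕ
  | 0 => 0
  | k+1 => if r (j0 - ((k+1 : ℕ) : ZMod n)) then mkTauR r j0 k + 1 else 0

lemma exists_tau_ellOf [NeZero n] (ℓ : ZMod n → Bool) (j0 : ZMod n)
    (hj0 : ℓ j0 = false) : ∃ τ : ZMod n → ℕ, ellOf τ = ℓ := by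
  refine ⟨fun j => mkTauL ℓ j0 ((j - j0).val), ?_⟩
  have hτ0 : mkTauL ℓ j0 ((j0 - j0).val) = 0 := by
    rw [sub_self, ZMod.val_zero]
    rfl
  funext j
  by_cases hj : j = j0
  · subst hj
    unfold ellOf
    beta_reduce
    rw [hτ0]
    simp [hj0]
  · have hd : (j - j0).val ≠ 0 := by
      intro h0
      exact hj (by rwa [ZMod.val_eq_zero, sub_eq_zero] at h0)
    obtain ⟨d, hd1⟩ : ∃ d, (j - j0).val = d + 1 := ⟨(j - j0).val - 1, by omega⟩
    have hcast : ((d + 1 : ℕ) : ZMod n) = j - j0 := by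
      rw [← hd1, ZMod.natCast_val, ZMod.cast_id]
    have hjj0 : j0 + ((d + 1 : ℕ) : ZMod n) = j := by
      rw [hcast, add_comm, sub_add_cancel]
    have hprev : j - 1 - j0 = ((d : ℕ) : ZMod n) := by
      have : j - j0 = ((d+1 : ℕ) : ZMod n) := hcast.symm
      push_cast at this ⊢
      rw [sub_sub, add_comm (1 : ZMod n) j0, ← sub_sub, this]
      ring
    have hdlt : d < n := by
      have := ZMod.val_lt (j - j0)
      omega
    have hτj : mkTauL ℓ j0 ((j - j0).val) = if ℓ j then mkTauL ℓ j0 d + 1 else 0 := by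
      rw [hd1]
      show (if ℓ (j0 + ((d+1 : ℕ) : ZMod n)) then mkTauL ℓ j0 d + 1 else 0) = _
      rw [hjj0]
    have hτprev : mkTauL ℓ j0 ((j - 1 - j0).val) = mkTauL ℓ j0 d := by
      rw [hprev, ZMod.val_cast_of_lt hdlt]
    unfold ellOf
    beta_reduce
    rw [hτj, hτprev]
    cases hℓ : ℓ j with
    | false => simp
    | true => simp



lemma exists_tau_rOf [NeZero n] (r : ZMod n → Bool) (j0 : ZMod n)
    (hj0 : r j0 = false) : ∃ τ : ZMod n → ℕ, rOf τ = r := by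
  refine ⟨fun j => mkTauR r j0 ((j0 - j).val), ?_⟩
  have hτ0 : mkTauR r j0 ((j0 - j0).val) = 0 := by
    rw [sub_self, ZMod.val_zero]
    rfl
  funext j
  by_cases hj : j = j0
  · subst hj
    unfold rOf
    beta_reduce
    rw [hτ0]
    simp [hj0]
  · have hd : (j0 - j).val ≠ 0 := by
      intro h0
      rw [ZMod.val_eq_zero, sub_eq_zero] at h0
      exact hj h0.symm
    obtain ⟨d, hd1⟩ : ∃ d, (j0 - j).val = d + 1 := ⟨(j0 - j).val - 1, by omega⟩
    have hcast : ((d + 1 : ℕ) : ZMod n) = j0 - j := by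
      rw [← hd1, ZMod.natCast_val, ZMod.cast_id]
    have hjj0 : j0 - ((d + 1 : ℕ) : ZMod n) = j := by
      rw [hcast]; ring
    have hprev : j0 - (j + 1) = ((d : ℕ) : ZMod n) := by
      have h5 : j0 - j = ((d+1 : ℕ) : ZMod n) := hcast.symm
      push_cast at h5 ⊢
      rw [sub_add_eq_sub_sub, h5]
      ring
    have hdlt : d < n := by
      have := ZMod.val_lt (j0 - j)
      omega
    have hτj : mkTauR r j0 ((j0 - j).val) = if r j then mkTauR r j0 d + 1 else 0 := by
      rw [hd1]
      show (if r (j0 - ((d+1 : ℕ) : ZMod n)) then mkTauR r j0 d + 1 else 0) = _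
      rw [hjj0]
    have hτprev : mkTauR r j0 ((j0 - (j + 1)).val) = mkTauR r j0 d := by
      rw [hprev, ZMod.val_cast_of_lt hdlt]
    unfold rOf
    beta_reduce
    rw [hτj, hτprev]
    cases hr : r j with
    | false => simp
    | true => simp

lemma exists_false_left {ℓ : ZMod n → Bool} [NeZero n] (hex : ∃ j0, ℓ j0 = false)
    (j : ZMod n) : ∃ k < n, ℓ (j - (k:ℕ)) = false := by
  obtain ⟨j0, hj0⟩ := hex
  refine ⟨(j - j0).val, ZMod.val_lt _, ?_⟩
  rw [ZMod.natCast_val, ZMod.cast_id, sub_sub_cancel]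
  exact hj0

lemma exists_false_right {r : ZMod n → Bool} [NeZero n] (hex : ∃ j0, r j0 = false)
    (j : ZMod n) : ∃ k < n, r (j + (k:ℕ)) = false := by
  obtain ⟨j0, hj0⟩ := hex
  refine ⟨(j0 - j).val, ZMod.val_lt _, ?_⟩
  rw [ZMod.natCast_val, ZMod.cast_id, add_comm, sub_add_cancel]
  exact hj0

lemma card_exists_eq (hn : 3 < n) (b : Bool) :
    {ℓ : ZMod n → Bool | ∃ j, ℓ j = b}.ncard = 2 ^ n - 1 := by
  haveI : NeZero n := ⟨by omega⟩
  have hs : {ℓ : ZMod n → Bool | ∃ j, ℓ j = b} = ({fun _ => !b} : Set (ZMod n → Bool))ᶜ := by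
    ext ℓ
    simp only [Set.mem_setOf_eq, Set.mem_compl_iff, Set.mem_singleton_iff]
    constructor
    · rintro ⟨j, hj⟩ hcon
      rw [hcon] at hj
      cases b <;> simp_all
    · intro hne
      by_contra hno
      push_neg at hno
      apply hne
      funext j
      have := hno j
      cases hb : ℓ j <;> cases b <;> simp_all
  rw [hs]
  have h2 := Set.ncard_add_ncard_compl ({fun _ => !b} : Set (ZMod n → Bool))
  rw [Set.ncard_singleton] at h2
  have hcard : Nat.card (ZMod n → Bool) = 2 ^ n := by
    rw [Nat.card_eq_fintype_card]
    rw [Fintype.card_fun]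
    simp [ZMod.card]
  omega



lemma cast_ne_zero' [NeZero n] {a : ℕ} (ha : a < n) (h0 : a ≠ 0) : (a : ZMod n) ≠ 0 := by
  intro hcon
  have := congrArg ZMod.val hcon
  rw [ZMod.val_cast_of_lt ha, ZMod.val_zero] at this
  exact h0 this

lemma cast_ne_cast' [NeZero n] {a b : ℕ} (ha : a ≤ n) (hb : b < n) (hab : a ≠ b)
    (hb0 : b ≠ 0) : (a : ZMod n) ≠ (b : ZMod n) := by
  rcases eq_or_lt_of_le ha with rfl | ha'
  · rw [ZMod.natCast_self]
    exact (cast_ne_zero' hb hb0).symm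
  · intro hcon
    have := congrArg ZMod.val hcon
    rw [ZMod.val_cast_of_lt ha', ZMod.val_cast_of_lt hb] at this
    exact hab this

lemma goL_flip (h : Bool → Bool → Bool → Bool) (hflip : ∀ a c, h a true c = !a)
    (ℓ x : ZMod n → Bool) :
    ∀ (k f : ℕ) (j : ZMod n), k ≤ f →
      (∀ i, i < k → ℓ (j - (i:ℕ)) = true) →
      (∀ i, i < k → x (j - (i:ℕ) - 1) = true) →
      goL h ℓ x f j = xor (decide (k % 2 = 1)) (goL h ℓ x (f - k) (j - (k:ℕ))) := by
  intro k
  induction k with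
  | zero =>
    intro f j _ _ _
    simp
  | succ k ih =>
    intro f j hkf hℓ hx
    obtain ⟨f', rfl⟩ : ∃ f', f = f' + 1 := ⟨f - 1, by omega⟩
    have hℓj : ℓ j = true := by
      have := hℓ 0 (by omega)
      simpa using this
    have hxj : x (j - 1) = true := by
      have := hx 0 (by omega)
      simpa using this
    show (if ℓ j then h (goL h ℓ x f' (j-1)) (x (j-1)) (x j) else x (j - 1)) = _
    rw [hℓj, if_pos rfl, hxj, hflip]
    rw [ih f' (j-1) (by omega) ?hl ?hx2]
    case hl =>
      intro i hi
      have := hℓ (i+1) (by omega)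
      have hc : j - ((i+1 : ℕ) : ZMod n) = j - 1 - (i:ℕ) := by push_cast; ring
      rwa [hc] at this
    case hx2 =>
      intro i hi
      have := hx (i+1) (by omega)
      have hc : j - ((i+1 : ℕ) : ZMod n) - 1 = j - 1 - (i:ℕ) - 1 := by push_cast; ring
      rwa [hc] at this
    have hc2 : j - 1 - ((k : ℕ) : ZMod n) = j - ((k+1 : ℕ) : ZMod n) := by push_cast; ring
    have hc3 : f' - k = f' + 1 - (k + 1) := by omega
    rw [hc2, ← hc3]
    have hpar : (decide ((k+1) % 2 = 1)) = !(decide (k % 2 = 1)) := by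
      rcases Nat.even_or_odd k with he | ho
      · have h1 : k % 2 = 0 := Nat.even_iff.mp he
        have h2 : (k+1) % 2 = 1 := by omega
        simp [h1, h2]
      · have h1 : k % 2 = 1 := Nat.odd_iff.mp ho
        have h2 : (k+1) % 2 = 0 := by omega
        simp [h1, h2]
    rw [hpar]
    cases decide (k % 2 = 1) <;> simp



def R28 : Bool → Bool → Bool → Bool := fun a b c => (!a && b) || (a && !b && !c)
def R32 : Bool → Bool → Bool → Bool := fun a b c => a && !b && c
def R44 : Bool → Bool → Bool → Bool := fun a b c => (!a && b) || (a && !b && c)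
def R140 : Bool → Bool → Bool → Bool := fun a b c => b && (!a || c)

lemma key28 [NeZero n] (hn : 3 < n) {a b : ZMod n → Bool} {j : ZMod n}
    (haj : a j = true) (hbj : b j = false) : FL R28 a ≠ FL R28 b := by
  intro heq
  set x : ZMod n → Bool := fun i => decide (i ≠ j - ((3:ℕ) : ZMod n)) with hxdef
  have e13 : ((1:ℕ) : ZMod n) ≠ ((3:ℕ) : ZMod n) :=
    cast_ne_cast' (by omega) (by omega) (by omega) (by omega)
  have e23 : ((2:ℕ) : ZMod n) ≠ ((3:ℕ) : ZMod n) :=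
    cast_ne_cast' (by omega) (by omega) (by omega) (by omega)
  have h30 : ((3:ℕ) : ZMod n) ≠ 0 := cast_ne_zero' (by omega) (by omega)
  have hxj : x j = true := by
    rw [hxdef]
    simp only [ne_eq, decide_eq_true_eq]
    intro hcon
    exact h30 (sub_eq_self.mp hcon.symm)
  have hx1 : x (j - 1) = true := by
    rw [hxdef]
    simp only [ne_eq, decide_eq_true_eq]
    intro hcon
    have : j - ((1:ℕ) : ZMod n) = j - ((3:ℕ) : ZMod n) := by push_cast; push_cast at hcon; exact hcon
    exact e13 (sub_right_inj.mp this)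
  have hx2 : x (j - 1 - 1) = true := by
    rw [hxdef]
    simp only [ne_eq, decide_eq_true_eq]
    intro hcon
    have hcon2 : j - ((2:ℕ) : ZMod n) = j - ((3:ℕ) : ZMod n) := by
      push_cast at hcon ⊢
      rw [← hcon]; ring
    exact e23 (sub_right_inj.mp hcon2)
  have hp : x (j - 1 - 1 - 1) = false := by
    rw [hxdef]
    simp only [ne_eq, decide_eq_false_iff_not, not_not]
    push_cast
    ring
  have ev1 : ∀ g c, R28 g true c = !g := by decide
  have ev2 : ∀ g, R28 g false true = false := by decide
  have hg2 : goL R28 a x (n-2) (j-1-1) = false := by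
    cases ha2 : a (j-1-1) with
    | false => rw [goL_false R28 a x _ ha2]; exact hp
    | true =>
      rw [goL_succ R28 a x (show 1 ≤ n-2 by omega), ha2, if_pos rfl, hp, hx2]
      exact ev2 _
  have hg1 : goL R28 a x (n-1) (j-1) = true := by
    cases ha1 : a (j-1) with
    | false => rw [goL_false R28 a x _ ha1]; exact hx2
    | true =>
      rw [goL_succ R28 a x (show 1 ≤ n-1 by omega), ha1, if_pos rfl, hx2, hx1]
      have hnn : n - 1 - 1 = n - 2 := by omega
      rw [hnn, hg2]
      rfl
  have hga : goL R28 a x n j = false := by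
    rw [goL_succ R28 a x (show 1 ≤ n by omega), haj, if_pos rfl, hx1, hxj, hg1]
    rfl
  have hL : FL R28 a x j = true := by
    unfold FL
    rw [hga, hxj, ev1]
    rfl
  have hRv : FL R28 b x j = false := by
    unfold FL
    rw [goL_succ R28 b x (show 1 ≤ n by omega), hbj]
    simp only [Bool.false_eq_true, if_false]
    rw [hx1, hxj, ev1]
    rfl
  rw [heq] at hL
  rw [hL] at hRv
  exact Bool.noConfusion hRv

lemma key140 [NeZero n] (hn : 3 < n) {a b : ZMod n → Bool} {j : ZMod n}
    (haj : a j = true) (hbj : b j = false) : FR R140 a ≠ FR R140 b := by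
  intro heq
  set x : ZMod n → Bool := fun i => decide (i ≠ j + ((2:ℕ) : ZMod n)) with hxdef
  have h20 : ((2:ℕ) : ZMod n) ≠ 0 := cast_ne_zero' (by omega) (by omega)
  have h12 : ((1:ℕ) : ZMod n) ≠ ((2:ℕ) : ZMod n) :=
    cast_ne_cast' (by omega) (by omega) (by omega) (by omega)
  have h30 : ((3:ℕ) : ZMod n) ≠ 0 := cast_ne_zero' (by omega) (by omega)
  have hxj : x j = true := by
    rw [hxdef]
    simp only [ne_eq, decide_eq_true_eq]
    intro hcon
    exact h20 (left_eq_add.mp hcon)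
  have hxm1 : x (j - 1) = true := by
    rw [hxdef]
    simp only [ne_eq, decide_eq_true_eq]
    intro hcon
    apply h30
    push_cast at hcon ⊢
    linear_combination -hcon
  have hxp1 : x (j + 1) = true := by
    rw [hxdef]
    simp only [ne_eq, decide_eq_true_eq]
    intro hcon
    apply h12
    push_cast at hcon ⊢
    linear_combination hcon
  have hxp2 : x (j + 1 + 1) = false := by
    rw [hxdef]
    simp only [ne_eq, decide_eq_false_iff_not, not_not]
    push_cast
    ring
  have ev1 : ∀ g, R140 true false g = false := by decide
  have hgr : goR R140 a x (n-1) (j+1) = false := by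
    cases ha1 : a (j+1) with
    | false => rw [goR_false R140 a x _ ha1]; exact hxp2
    | true =>
      rw [goR_succ R140 a x (show 1 ≤ n-1 by omega), ha1, if_pos rfl, hxp1, hxp2]
      exact ev1 _
  have hga : goR R140 a x n j = false := by
    rw [goR_succ R140 a x (show 1 ≤ n by omega), haj, if_pos rfl, hxj, hxp1, hgr]
    rfl
  have hL : FR R140 a x j = false := by
    unfold FR
    rw [hga, hxj, hxm1]
    rfl
  have hRv : FR R140 b x j = true := by
    unfold FR
    rw [goR_false R140 b x _ hbj, hxp1, hxj, hxm1]
    rfl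
  rw [heq] at hL
  rw [hL] at hRv
  exact Bool.noConfusion hRv



lemma key44 [NeZero n] (hn : 3 < n) {a b : ZMod n → Bool} {j : ZMod n}
    (hfeas : ∀ j' : ZMod n, ∃ k < n, a (j' - (k:ℕ)) = false)
    (haj : a j = true) (hbj : b j = false) : FL R44 a ≠ FL R44 b := by
  intro heq
  have H : ∃ k, a (j - (k:ℕ)) = false := by
    obtain ⟨k, _, hk⟩ := hfeas j
    exact ⟨k, hk⟩
  set m := Nat.find H with hmdef
  have hend : a (j - (m:ℕ)) = false := Nat.find_spec H
  have hm0 : 1 ≤ m := by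
    rcases Nat.eq_zero_or_pos m with h0 | h1
    · exfalso
      rw [h0] at hend
      simp only [Nat.cast_zero, sub_zero] at hend
      rw [haj] at hend
      exact Bool.noConfusion hend
    · exact h1
  have hmn : m < n := by
    obtain ⟨k, hk1, hk2⟩ := hfeas j
    exact lt_of_le_of_lt (Nat.find_min' H hk2) hk1
  have hrun : ∀ i, i < m → a (j - (i:ℕ)) = true := by
    intro i hi
    have := Nat.find_min H hi
    simpa using this
  have hflip : ∀ g c, R44 g true c = !g := by decide
  have hpass : ∀ g, R44 g false true = g := by decide
  by_cases hpar : m % 2 = 1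
  · -- m odd : single zero at j - 1
    set x : ZMod n → Bool := fun i => decide (i ≠ j - ((1:ℕ) : ZMod n)) with hxdef
    have h10 : ((1:ℕ) : ZMod n) ≠ 0 := cast_ne_zero' (by omega) (by omega)
    have hxj : x j = true := by
      rw [hxdef]
      simp only [ne_eq, decide_eq_true_eq]
      intro hcon
      exact h10 (sub_eq_self.mp hcon.symm)
    have hxm1 : x (j - 1) = false := by
      rw [hxdef]
      simp only [ne_eq, decide_eq_false_iff_not, not_not]
      push_cast
      ring
    have hW1 : ∀ i, i < m - 1 → a (j - 1 - (i:ℕ)) = true := by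
      intro i hi
      have := hrun (i+1) (by omega)
      have hc : j - ((i+1 : ℕ) : ZMod n) = j - 1 - (i:ℕ) := by push_cast; ring
      rwa [hc] at this
    have hW2 : ∀ i, i < m - 1 → x (j - 1 - (i:ℕ) - 1) = true := by
      intro i hi
      rw [hxdef]
      simp only [ne_eq, decide_eq_true_eq]
      intro hcon
      have hc : j - ((i+2 : ℕ) : ZMod n) = j - ((1:ℕ) : ZMod n) := by
        push_cast at hcon ⊢
        linear_combination hcon
      have := sub_right_inj.mp hc
      exact cast_ne_cast' (n := n) (show i+2 ≤ n by omega) (by omega) (by omega) (by omega) this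
    have htail : goL R44 a x (n - 1 - (m-1)) (j - 1 - ((m-1 : ℕ) : ZMod n)) = true := by
      have hc : j - 1 - ((m-1 : ℕ) : ZMod n) = j - (m : ℕ) := by
        rw [Nat.cast_sub hm0]
        push_cast
        ring
      rw [hc, goL_false R44 a x _ hend, hxdef]
      simp only [ne_eq, decide_eq_true_eq]
      intro hcon
      have hc2 : j - ((m+1 : ℕ) : ZMod n) = j - ((1:ℕ) : ZMod n) := by
        push_cast at hcon ⊢
        linear_combination hcon
      have := sub_right_inj.mp hc2
      exact cast_ne_cast' (n := n) (show m+1 ≤ n by omega) (by omega) (by omega) (by omega) this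
    have hgm : goL R44 a x (n-1) (j-1) = true := by
      rw [goL_flip R44 (by decide) a x (m-1) (n-1) (j-1) (by omega) hW1 hW2, htail]
      have : (m - 1) % 2 = 0 := by omega
      simp [this]
    have hga : goL R44 a x n j = true := by
      rw [goL_succ R44 a x (show 1 ≤ n by omega), haj, if_pos rfl, hxm1, hxj, hpass, hgm]
    have hLv : FL R44 a x j = false := by
      unfold FL
      rw [hga, hxj, hflip]
      rfl
    have hRv : FL R44 b x j = true := by
      unfold FL
      rw [goL_succ R44 b x (show 1 ≤ n by omega), hbj]
      simp only [Bool.false_eq_true, if_false]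
      rw [hxm1, hxj, hflip]
      rfl
    rw [heq] at hLv
    rw [hLv] at hRv
    exact Bool.noConfusion hRv
  · -- m even, m ≥ 2 : single zero at j - 2
    have hm2 : 2 ≤ m := by omega
    set x : ZMod n → Bool := fun i => decide (i ≠ j - ((2:ℕ) : ZMod n)) with hxdef
    have h20 : ((2:ℕ) : ZMod n) ≠ 0 := cast_ne_zero' (by omega) (by omega)
    have h12 : ((1:ℕ) : ZMod n) ≠ ((2:ℕ) : ZMod n) :=
      cast_ne_cast' (by omega) (by omega) (by omega) (by omega)
    have hxj : x j = true := by
      rw [hxdef]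
      simp only [ne_eq, decide_eq_true_eq]
      intro hcon
      exact h20 (sub_eq_self.mp hcon.symm)
    have hxm1 : x (j - 1) = true := by
      rw [hxdef]
      simp only [ne_eq, decide_eq_true_eq]
      intro hcon
      apply h12
      apply sub_right_inj.mp
      push_cast at hcon ⊢
      linear_combination hcon
    have hxm2 : x (j - 1 - 1) = false := by
      rw [hxdef]
      simp only [ne_eq, decide_eq_false_iff_not, not_not]
      push_cast
      ring
    have hrun1 : a (j - 1) = true := by
      have := hrun 1 (by omega)
      simpa using this
    have hW1 : ∀ i, i < m - 2 → a (j - 1 - 1 - (i:ℕ)) = true := by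
      intro i hi
      have := hrun (i+2) (by omega)
      have hc : j - ((i+2 : ℕ) : ZMod n) = j - 1 - 1 - (i:ℕ) := by push_cast; ring
      rwa [hc] at this
    have hW2 : ∀ i, i < m - 2 → x (j - 1 - 1 - (i:ℕ) - 1) = true := by
      intro i hi
      rw [hxdef]
      simp only [ne_eq, decide_eq_true_eq]
      intro hcon
      have hc : j - ((i+3 : ℕ) : ZMod n) = j - ((2:ℕ) : ZMod n) := by
        push_cast at hcon ⊢
        linear_combination hcon
      have := sub_right_inj.mp hc
      exact cast_ne_cast' (n := n) (show i+3 ≤ n by omega) (by omega) (by omega) (by omega) this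
    have htail : goL R44 a x (n - 2 - (m-2)) (j - 1 - 1 - ((m-2 : ℕ) : ZMod n)) = true := by
      have hc : j - 1 - 1 - ((m-2 : ℕ) : ZMod n) = j - (m : ℕ) := by
        rw [Nat.cast_sub hm2]
        push_cast
        ring
      rw [hc, goL_false R44 a x _ hend, hxdef]
      simp only [ne_eq, decide_eq_true_eq]
      intro hcon
      have hc2 : j - ((m+1 : ℕ) : ZMod n) = j - ((2:ℕ) : ZMod n) := by
        push_cast at hcon ⊢
        linear_combination hcon
      have := sub_right_inj.mp hc2
      exact cast_ne_cast' (n := n) (show m+1 ≤ n by omega) (by omega) (by omega) (by omega) this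
    have hgm2 : goL R44 a x (n-2) (j-1-1) = true := by
      rw [goL_flip R44 (by decide) a x (m-2) (n-2) (j-1-1) (by omega) hW1 hW2]
      have hc3 : n - 2 - (m - 2) = n - 2 - (m-2) := rfl
      rw [htail]
      have : (m - 2) % 2 = 0 := by omega
      simp [this]
    have hgm : goL R44 a x (n-1) (j-1) = true := by
      rw [goL_succ R44 a x (show 1 ≤ n-1 by omega), hrun1, if_pos rfl, hxm2, hxm1, hpass]
      have hc : n - 1 - 1 = n - 2 := by omega
      rw [hc, hgm2]
    have hga : goL R44 a x n j = false := by
      rw [goL_succ R44 a x (show 1 ≤ n by omega), haj, if_pos rfl, hxm1, hflip, hgm]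
      rfl
    have hLv : FL R44 a x j = true := by
      unfold FL
      rw [hga, hxj, hflip]
      rfl
    have hRv : FL R44 b x j = false := by
      unfold FL
      rw [goL_succ R44 b x (show 1 ≤ n by omega), hbj]
      simp only [Bool.false_eq_true, if_false]
      rw [hxm1, hxj, hflip]
      rfl
    rw [heq] at hLv
    rw [hLv] at hRv
    exact Bool.noConfusion hRv



/-- local-minimum indicator of a schedule -/
def sOf (τ : ZMod n → ℕ) (j : ZMod n) : Bool :=
  !(decide (τ (j-1) < τ j)) && !(decide (τ (j+1) < τ j))

/-- closed form for rule 32 -/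
def F32 (s : ZMod n → Bool) : (ZMod n → Bool) → ZMod n → Bool :=
  fun x j => s j && (x (j-1) && !(x j) && x (j+1))

lemma async32 (τ : ZMod n → ℕ) (x : ZMod n → Bool) (j : ZMod n) :
    ecaAsync n R32 τ x j = F32 (sOf τ) x j := by
  unfold F32
  rw [async_master R32 τ x j]
  by_cases hl : τ (j-1) < τ j
  · rw [if_pos hl, async_master R32 τ x (j-1), sub_add_cancel j 1,
      if_neg (show ¬ τ j < τ (j-1) by omega)]
    have hs : sOf τ j = false := by simp [sOf, hl]
    rw [hs]
    simp only [R32]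
    cases x j <;> simp
  · by_cases hr : τ (j+1) < τ j
    · rw [if_neg hl, if_pos hr, async_master R32 τ x (j+1), add_sub_cancel_right,
        if_neg (show ¬ τ j < τ (j+1) by omega)]
      have hs : sOf τ j = false := by simp [sOf, hr]
      rw [hs]
      simp only [R32]
      cases x j <;> simp
    · rw [if_neg hl, if_neg hr]
      have hs : sOf τ j = true := by simp [sOf, hl, hr]
      rw [hs]
      simp only [R32]
      cases x j <;> simp

lemma exists_sOf_true [NeZero n] (τ : ZMod n → ℕ) : ∃ j, sOf τ j = true := by
  obtain ⟨j, -, hj⟩ := Finset.exists_min_image Finset.univ τ ⟨0, Finset.mem_univ 0⟩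
  refine ⟨j, ?_⟩
  have h1 := hj (j-1) (Finset.mem_univ _)
  have h2 := hj (j+1) (Finset.mem_univ _)
  simp only [sOf, Bool.and_eq_true, Bool.not_eq_true', decide_eq_false_iff_not]
  omega

lemma exists_tau_sOf [NeZero n] (s : ZMod n → Bool) (j0 : ZMod n)
    (hj0 : s j0 = true) : ∃ τ : ZMod n → ℕ, sOf τ = s := by
  have hex : ∀ j : ZMod n, ∃ k : ℕ, s (j + (k:ℕ)) = true ∨ s (j - (k:ℕ)) = true := by
    intro j
    refine ⟨(j0 - j).val, Or.inl ?_⟩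
    rw [ZMod.natCast_val, ZMod.cast_id, add_comm, sub_add_cancel]
    exact hj0
  refine ⟨fun j => Nat.find (hex j), ?_⟩
  have ht0 : ∀ j : ZMod n, Nat.find (hex j) = 0 ↔ s j = true := by
    intro j
    rw [Nat.find_eq_zero]
    simp
  funext j
  cases hs : s j with
  | true =>
    have hj : Nat.find (hex j) = 0 := (ht0 j).mpr hs
    simp only [sOf, Bool.and_eq_true, Bool.not_eq_true', decide_eq_false_iff_not]
    rw [hj]
    omega
  | false =>
    have hk0 : Nat.find (hex j) ≠ 0 := fun h0 => by rw [(ht0 j).mp h0] at hs; exact Bool.noConfusion hs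
    obtain ⟨k, hk⟩ : ∃ k, Nat.find (hex j) = k + 1 := ⟨Nat.find (hex j) - 1, by omega⟩
    have hspec := Nat.find_spec (hex j)
    unfold sOf
    beta_reduce
    rcases hspec with hsp | hsp
    · have hle : Nat.find (hex (j+1)) ≤ k := by
        apply Nat.find_le
        left
        have hc : j + 1 + ((k:ℕ) : ZMod n) = j + ((k+1 : ℕ) : ZMod n) := by push_cast; ring
        rw [hc, ← hk]
        exact hsp
      have : Nat.find (hex (j+1)) < Nat.find (hex j) := by omega
      simp [this]
    · have hle : Nat.find (hex (j-1)) ≤ k := by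
        apply Nat.find_le
        right
        have hc : j - 1 - ((k:ℕ) : ZMod n) = j - ((k+1 : ℕ) : ZMod n) := by push_cast; ring
        rw [hc, ← hk]
        exact hsp
      have : Nat.find (hex (j-1)) < Nat.find (hex j) := by omega
      simp [this]

lemma key32 [NeZero n] (hn : 3 < n) {a b : ZMod n → Bool} {j : ZMod n}
    (haj : a j = true) (hbj : b j = false) : F32 a ≠ F32 b := by
  intro heq
  set x : ZMod n → Bool := fun i => decide (i ≠ j) with hxdef
  have h10 : ((1:ℕ) : ZMod n) ≠ 0 := cast_ne_zero' (by omega) (by omega)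
  have hxj : x j = false := by simp [hxdef]
  have hxm : x (j - 1) = true := by
    rw [hxdef]
    simp only [ne_eq, decide_eq_true_eq]
    intro hcon
    apply h10
    push_cast
    linear_combination -hcon
  have hxp : x (j + 1) = true := by
    rw [hxdef]
    simp only [ne_eq, decide_eq_true_eq]
    intro hcon
    apply h10
    push_cast
    linear_combination hcon
  have hLv : F32 a x j = true := by
    unfold F32
    rw [haj, hxj, hxm, hxp]
    rfl
  have hRv : F32 b x j = false := by
    unfold F32
    rw [hbj]
    rfl
  rw [heq] at hLv
  rw [hLv] at hRv
  exact Bool.noConfusion hRv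



lemma injOn_FL28 [NeZero n] (hn : 3 < n) :
    Set.InjOn (FL (n := n) R28) {ℓ | ∃ j, ℓ j = false} := by
  intro a _ b _ heq
  by_contra hne
  obtain ⟨j, hj⟩ := Function.ne_iff.mp hne
  cases haj : a j <;> cases hbj : b j
  · rw [haj, hbj] at hj; exact hj rfl
  · exact key28 hn hbj haj heq.symm
  · exact key28 hn haj hbj heq
  · rw [haj, hbj] at hj; exact hj rfl

lemma injOn_FL44 [NeZero n] (hn : 3 < n) :
    Set.InjOn (FL (n := n) R44) {ℓ | ∃ j, ℓ j = false} := by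
  intro a ha b hb heq
  by_contra hne
  obtain ⟨j, hj⟩ := Function.ne_iff.mp hne
  cases haj : a j <;> cases hbj : b j
  · rw [haj, hbj] at hj; exact hj rfl
  · exact key44 hn (fun j' => exists_false_left hb j') hbj haj heq.symm
  · exact key44 hn (fun j' => exists_false_left ha j') haj hbj heq
  · rw [haj, hbj] at hj; exact hj rfl

lemma injOn_FR140 [NeZero n] (hn : 3 < n) :
    Set.InjOn (FR (n := n) R140) {r | ∃ j, r j = false} := by
  intro a _ b _ heq
  by_contra hne
  obtain ⟨j, hj⟩ := Function.ne_iff.mp hne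
  cases haj : a j <;> cases hbj : b j
  · rw [haj, hbj] at hj; exact hj rfl
  · exact key140 hn hbj haj heq.symm
  · exact key140 hn haj hbj heq
  · rw [haj, hbj] at hj; exact hj rfl

lemma injOn_F32 [NeZero n] (hn : 3 < n) :
    Set.InjOn (F32 (n := n)) {s | ∃ j, s j = true} := by
  intro a _ b _ heq
  by_contra hne
  obtain ⟨j, hj⟩ := Function.ne_iff.mp hne
  cases haj : a j <;> cases hbj : b j
  · rw [haj, hbj] at hj; exact hj rfl
  · exact key32 hn hbj haj heq.symm
  · exact key32 hn haj hbj heq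
  · rw [haj, hbj] at hj; exact hj rfl

lemma count28 (hn : 3 < n) :
    {g | ∃ τ : ZMod n → ℕ, g = ecaAsync n R28 τ}.ncard = 2 ^ n - 1 := by
  haveI : NeZero n := ⟨by omega⟩
  have hR : ∀ a b c c₀ : Bool, R28 a b (R28 b c c₀) = R28 a b c := by decide
  have hset : {g | ∃ τ : ZMod n → ℕ, g = ecaAsync n R28 τ}
      = FL R28 '' {ℓ : ZMod n → Bool | ∃ j, ℓ j = false} := by
    ext g
    simp only [Set.mem_setOf_eq, Set.mem_image]
    constructor
    · rintro ⟨τ, rfl⟩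
      refine ⟨ellOf τ, ?_, ?_⟩
      · obtain ⟨k, hk, hkf⟩ := ellOf_feas (by omega) τ 0
        exact ⟨_, hkf⟩
      · funext x j
        exact (async_eq_FL (by omega) R28 hR τ x j).symm
    · rintro ⟨ℓ, ⟨j0, hj0⟩, rfl⟩
      obtain ⟨τ, hτ⟩ := exists_tau_ellOf ℓ j0 hj0
      refine ⟨τ, ?_⟩
      rw [← hτ]
      funext x j
      exact (async_eq_FL (by omega) R28 hR τ x j).symm
  rw [hset, Set.ncard_image_of_injOn (injOn_FL28 hn), card_exists_eq hn false]

lemma count44 (hn : 3 < n) :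
    {g | ∃ τ : ZMod n → ℕ, g = ecaAsync n R44 τ}.ncard = 2 ^ n - 1 := by
  haveI : NeZero n := ⟨by omega⟩
  have hR : ∀ a b c c₀ : Bool, R44 a b (R44 b c c₀) = R44 a b c := by decide
  have hset : {g | ∃ τ : ZMod n → ℕ, g = ecaAsync n R44 τ}
      = FL R44 '' {ℓ : ZMod n → Bool | ∃ j, ℓ j = false} := by
    ext g
    simp only [Set.mem_setOf_eq, Set.mem_image]
    constructor
    · rintro ⟨τ, rfl⟩
      refine ⟨ellOf τ, ?_, ?_⟩
      · obtain ⟨k, hk, hkf⟩ := ellOf_feas (by omega) τ 0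
        exact ⟨_, hkf⟩
      · funext x j
        exact (async_eq_FL (by omega) R44 hR τ x j).symm
    · rintro ⟨ℓ, ⟨j0, hj0⟩, rfl⟩
      obtain ⟨τ, hτ⟩ := exists_tau_ellOf ℓ j0 hj0
      refine ⟨τ, ?_⟩
      rw [← hτ]
      funext x j
      exact (async_eq_FL (by omega) R44 hR τ x j).symm
  rw [hset, Set.ncard_image_of_injOn (injOn_FL44 hn), card_exists_eq hn false]

lemma count140 (hn : 3 < n) :
    {g | ∃ τ : ZMod n → ℕ, g = ecaAsync n R140 τ}.ncard = 2 ^ n - 1 := by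
  haveI : NeZero n := ⟨by omega⟩
  have hL : ∀ a₀ a b c : Bool, R140 (R140 a₀ a b) b c = R140 a b c := by decide
  have hset : {g | ∃ τ : ZMod n → ℕ, g = ecaAsync n R140 τ}
      = FR R140 '' {r : ZMod n → Bool | ∃ j, r j = false} := by
    ext g
    simp only [Set.mem_setOf_eq, Set.mem_image]
    constructor
    · rintro ⟨τ, rfl⟩
      refine ⟨rOf τ, ?_, ?_⟩
      · obtain ⟨k, hk, hkf⟩ := rOf_feas (by omega) τ 0
        exact ⟨_, hkf⟩
      · funext x j
        exact (async_eq_FR (by omega) R140 hL τ x j).symm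
    · rintro ⟨r, ⟨j0, hj0⟩, rfl⟩
      obtain ⟨τ, hτ⟩ := exists_tau_rOf r j0 hj0
      refine ⟨τ, ?_⟩
      rw [← hτ]
      funext x j
      exact (async_eq_FR (by omega) R140 hL τ x j).symm
  rw [hset, Set.ncard_image_of_injOn (injOn_FR140 hn), card_exists_eq hn false]

lemma count32 (hn : 3 < n) :
    {g | ∃ τ : ZMod n → ℕ, g = ecaAsync n R32 τ}.ncard = 2 ^ n - 1 := by
  haveI : NeZero n := ⟨by omega⟩
  have hset : {g | ∃ τ : ZMod n → ℕ, g = ecaAsync n R32 τ}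
      = F32 '' {s : ZMod n → Bool | ∃ j, s j = true} := by
    ext g
    simp only [Set.mem_setOf_eq, Set.mem_image]
    constructor
    · rintro ⟨τ, rfl⟩
      refine ⟨sOf τ, exists_sOf_true τ, ?_⟩
      funext x j
      exact (async32 τ x j).symm
    · rintro ⟨s, ⟨j0, hj0⟩, rfl⟩
      obtain ⟨τ, hτ⟩ := exists_tau_sOf s j0 hj0
      refine ⟨τ, ?_⟩
      rw [← hτ]
      funext x j
      exact (async32 τ x j).symm
  rw [hset, Set.ncard_image_of_injOn (injOn_F32 hn), card_exists_eq hn true]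

end ECAAux

/-- Rules 28, 32, 44, 140: the number of distinct asynchronous global
functions equals $2^n - 1$. -/
theorem rules_28_32_44_140_count (n : ℕ) (hn : 3 < n) :
    {g | ∃ τ : ZMod n → ℕ,
        g = ecaAsync n (fun a b c => (!a && b) || (a && !b && !c)) τ}.ncard = 2 ^ n - 1 ∧
    {g | ∃ τ : ZMod n → ℕ,
        g = ecaAsync n (fun a b c => a && !b && c) τ}.ncard = 2 ^ n - 1 ∧
    {g | ∃ τ : ZMod n → ℕ,
        g = ecaAsync n (fun a b c => (!a && b) || (a && !b && c)) τ}.ncard = 2 ^ n - 1 ∧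
    {g | ∃ τ : ZMod n → ℕ,
        g = ecaAsync n (fun a b c => b && (!a || c)) τ}.ncard = 2 ^ n - 1 :=
  ⟨ECAAux.count28 hn, ECAAux.count32 hn, ECAAux.count44 hn, ECAAux.count140 hn⟩
end

section
/- For the ECA rule 8, with local rule h(a,b,c) = ¬a ∧ b ∧ c, and for every n ≥ 3: if two block-sequential update schedules τ and τ' satisfy lab_τ((i,i−1)) ≠ lab_τ'((i,i−1)) for some cell i ∈ ℤ/nℤ, then there exists a configuration x with f^{(τ)}(x) ≠ f^{(τ')}(x), i.e. the two dynamics differ. -/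
section Aux

variable {n : ℕ} (h : Bool → Bool → Bool → Bool) (τ : ZMod n → ℕ) (x : ZMod n → Bool)

lemma ecaUpTo_of_lt (j : ZMod n) :
    ∀ k, k < τ j → ecaUpTo n h τ k x j = x j
  | 0, hk => by
      show ecaStep n h τ 0 x j = x j
      unfold ecaStep
      rw [if_neg (by omega)]
  | (k+1), hk => by
      show ecaStep n h τ (k+1) (ecaUpTo n h τ k x) j = x j
      unfold ecaStep
      rw [if_neg (by omega)]
      exact ecaUpTo_of_lt j k (by omega)

lemma ecaUpTo_stable (j : ZMod n) :
    ∀ k, τ j ≤ k → ecaUpTo n h τ k x j = ecaUpTo n h τ (τ j) x j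
  | 0, hk => by rw [show τ j = 0 from Nat.le_zero.mp hk]
  | (k+1), hk => by
      rcases Nat.lt_or_ge k (τ j) with hlt | hge
      · rw [show τ j = k + 1 by omega]
      · show ecaStep n h τ (k+1) (ecaUpTo n h τ k x) j = _
        unfold ecaStep
        rw [if_neg (by omega)]
        exact ecaUpTo_stable j k hge

lemma ecaUpTo_false (hh : ∀ a c, h a false c = false) (j : ZMod n) (hx : x j = false) :
    ∀ k, ecaUpTo n h τ k x j = false
  | 0 => by
      show ecaStep n h τ 0 x j = false
      unfold ecaStep
      split
      · rw [hx, hh]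
      · exact hx
  | (k+1) => by
      show ecaStep n h τ (k+1) (ecaUpTo n h τ k x) j = false
      unfold ecaStep
      split
      · rw [ecaUpTo_false hh j hx k, hh]
      · exact ecaUpTo_false hh j hx k

lemma rule8_key (n : ℕ) (hn : 3 ≤ n) (τ : ZMod n → ℕ) (i : ZMod n) :
    ecaAsync n (fun a b c => !a && b && c) τ
      (fun j => decide (j = i - 1 ∨ j = i)) (i - 1) = lab n τ i (i - 1) := by
  set h : Bool → Bool → Bool → Bool := fun a b c => !a && b && c with hh
  set x : ZMod n → Bool := fun j => decide (j = i - 1 ∨ j = i) with hxdef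
  have hb : ∀ a c, h a false c = false := by intro a c; simp [hh]
  have hc : ∀ a b, h a b false = false := by intro a b; simp [hh]
  have h1 : (1 : ZMod n) ≠ 0 := by
    haveI : Fact (1 < n) := ⟨by omega⟩
    exact one_ne_zero
  have h2 : (2 : ZMod n) ≠ 0 := by
    intro habs
    haveI : NeZero n := ⟨by omega⟩
    have h2' : ((2 : ℕ) : ZMod n) = 0 := by push_cast; exact habs
    rw [ZMod.natCast_eq_zero_iff] at h2'
    have := Nat.le_of_dvd (by norm_num) h2'
    omega
  have hxm2 : x (i - 1 - 1) = false := by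
    simp only [hxdef, decide_eq_false_iff_not, not_or]
    constructor
    · intro habs; exact h1 (by linear_combination -habs)
    · intro habs; exact h2 (by linear_combination -habs)
  have hxp1 : x (i + 1) = false := by
    simp only [hxdef, decide_eq_false_iff_not, not_or]
    constructor
    · intro habs; exact h2 (by linear_combination habs)
    · intro habs; exact h1 (by linear_combination habs)
  have hxm1 : x (i - 1) = true := by simp [hxdef]
  have hxi : x i = true := by simp [hxdef]
  have hsub : i - 1 + 1 = i := by ring
  -- value of cell i after its own update is false
  have hival : ecaUpTo n h τ (τ i) x i = false := by
    rcases Nat.eq_zero_or_eq_succ_pred (τ i) with h0 | hs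
    · rw [h0]
      show ecaStep n h τ 0 x i = false
      unfold ecaStep
      rw [if_pos (by omega), hxp1, hc]
    · rw [hs]
      show ecaStep n h τ (τ i - 1 + 1) (ecaUpTo n h τ (τ i - 1) x) i = false
      unfold ecaStep
      rw [if_pos (by omega), ecaUpTo_false h τ x hb (i+1) hxp1, hc]
  -- main computation
  rcases Nat.eq_zero_or_eq_succ_pred (τ (i-1)) with h0 | hs
  · have : ecaAsync n h τ x (i - 1) = ecaStep n h τ 0 x (i - 1) := by
      unfold ecaAsync; rw [h0]; rfl
    rw [this]
    unfold ecaStep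
    rw [if_pos (by omega), hxm2, hxm1, hsub, hxi]
    simp [hh, lab, h0]
  · set m := τ (i - 1) - 1 with hm
    have : ecaAsync n h τ x (i - 1)
        = ecaStep n h τ (m + 1) (ecaUpTo n h τ m x) (i - 1) := by
      unfold ecaAsync; rw [hs]; rfl
    rw [this]
    unfold ecaStep
    rw [if_pos (by omega), ecaUpTo_false h τ x hb (i-1-1) hxm2,
      ecaUpTo_of_lt h τ x (i-1) m (by omega), hxm1, hsub]
    rcases Nat.lt_or_ge m (τ i) with hlt | hge
    · rw [ecaUpTo_of_lt h τ x i m hlt, hxi]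
      simp [hh, lab]
      omega
    · rw [ecaUpTo_stable h τ x i m hge, hival]
      simp [hh, lab]
      omega

end Aux

/-- Rule 8 (h a b c = ¬a ∧ b ∧ c): if two schedules differ on the label of
some arc $(i,i-1)$ then their dynamics differ. -/
theorem rule_8_counterclockwise_diff (n : ℕ) (hn : 3 ≤ n) (τ τ' : ZMod n → ℕ)
    (i : ZMod n) (hdiff : lab n τ i (i - 1) ≠ lab n τ' i (i - 1)) :
    ∃ x : ZMod n → Bool,
      ecaAsync n (fun a b c => !a && b && c) τ x ≠
        ecaAsync n (fun a b c => !a && b && c) τ' x := by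
  refine ⟨fun j => decide (j = i - 1 ∨ j = i), fun habs => hdiff ?_⟩
  have := congrFun habs (i - 1)
  rwa [rule8_key n hn τ i, rule8_key n hn τ' i] at this
end

section
/- For the ECA rule 8, with local rule h(a,b,c) = ¬a ∧ b ∧ c, and for every n ≥ 3: if two block-sequential update schedules τ and τ' satisfy, for some cell i ∈ ℤ/nℤ, (1) lab_τ((i+1,i)) = lab_τ'((i+1,i)) = ⊖, (2) lab_τ((i−1,i)) ≠ lab_τ'((i−1,i)), and (3) lab_τ and lab_τ' agree on every arc other than (i−1,i), then f^{(τ)} = f^{(τ')}, i.e. the two dynamics are identical. -/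
lemma ecaUpTo_stab (n : ℕ) (h : Bool → Bool → Bool → Bool) (τ : ZMod n → ℕ) :
    ∀ k x j, τ j ≤ k → ecaUpTo n h τ k x j = ecaAsync n h τ x j := by
  intro k
  induction k with
  | zero => intro x j hj; simp [ecaAsync, Nat.le_zero.mp hj]
  | succ k ih =>
    intro x j hj
    rcases Nat.lt_or_ge (τ j) (k + 1) with hlt | hge
    · have hle : τ j ≤ k := Nat.lt_succ_iff.mp hlt
      have hne : τ j ≠ k + 1 := Nat.ne_of_lt hlt
      show ecaStep n h τ (k + 1) (ecaUpTo n h τ k x) j = _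
      rw [ecaStep, if_neg hne]
      exact ih x j hle
    · have heq : τ j = k + 1 := le_antisymm hj hge
      simp [ecaAsync, heq]

lemma ecaUpTo_old (n : ℕ) (h : Bool → Bool → Bool → Bool) (τ : ZMod n → ℕ) :
    ∀ k x j, k < τ j → ecaUpTo n h τ k x j = x j := by
  intro k
  induction k with
  | zero =>
    intro x j hj
    show ecaStep n h τ 0 x j = x j
    rw [ecaStep, if_neg hj.ne']
  | succ k ih =>
    intro x j hj
    show ecaStep n h τ (k + 1) (ecaUpTo n h τ k x) j = x j
    rw [ecaStep, if_neg hj.ne']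
    exact ih x j (Nat.lt_of_succ_lt hj)

lemma ecaAsync_eq (n : ℕ) (h : Bool → Bool → Bool → Bool) (τ : ZMod n → ℕ)
    (x : ZMod n → Bool) (j : ZMod n) :
    ecaAsync n h τ x j =
      h (if τ (j - 1) < τ j then ecaAsync n h τ x (j - 1) else x (j - 1)) (x j)
        (if τ (j + 1) < τ j then ecaAsync n h τ x (j + 1) else x (j + 1)) := by
  rcases hk : τ j with _ | m
  · have : ecaAsync n h τ x j = ecaStep n h τ 0 x j := by
      simp [ecaAsync, hk, ecaUpTo]
    rw [this, ecaStep, if_pos hk]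
    rw [if_neg (by simp [hk]), if_neg (by simp [hk])]
  · have : ecaAsync n h τ x j = ecaStep n h τ (m + 1) (ecaUpTo n h τ m x) j := by
      simp [ecaAsync, hk, ecaUpTo]
    rw [this, ecaStep, if_pos hk]
    have hmid : ecaUpTo n h τ m x j = x j :=
      ecaUpTo_old n h τ m x j (by omega)
    rw [hmid]
    congr 1
    · by_cases hl : τ (j - 1) < m + 1
      · rw [if_pos hl]; exact ecaUpTo_stab n h τ m x (j - 1) (by omega)
      · rw [if_neg hl]; exact ecaUpTo_old n h τ m x (j - 1) (by omega)
    · by_cases hr2 : τ (j + 1) < m + 1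
      · rw [if_pos hr2]; exact ecaUpTo_stab n h τ m x (j + 1) (by omega)
      · rw [if_neg hr2]; exact ecaUpTo_old n h τ m x (j + 1) (by omega)

/-- Rule 8: if the two schedules agree everywhere except on the arc $(i-1,i)$,
and the arc $(i+1,i)$ is labeled ⊖ in both, then the dynamics coincide. -/
theorem rule_8_eq (n : ℕ) (hn : 3 ≤ n) (τ τ' : ZMod n → ℕ) (i : ZMod n)
    (h1 : lab n τ (i + 1) i = false ∧ lab n τ' (i + 1) i = false)
    (h2 : lab n τ (i - 1) i ≠ lab n τ' (i - 1) i)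
    (h3 : ∀ j k : ZMod n, (k = j + 1 ∨ k = j - 1) → (j, k) ≠ (i - 1, i) →
      lab n τ j k = lab n τ' j k) :
    ecaAsync n (fun a b c => !a && b && c) τ =
      ecaAsync n (fun a b c => !a && b && c) τ' := by
  set r : Bool → Bool → Bool → Bool := fun a b c => !a && b && c with hr
  have hA : τ (i + 1) < τ i := by
    have := h1.1; simp [lab] at this; omega
  have hA' : τ' (i + 1) < τ' i := by
    have := h1.2; simp [lab] at this; omega
  -- value at cell i is always false, for any schedule σ with σ (i+1) < σ i
  have hfalse : ∀ (σ : ZMod n → ℕ), σ (i + 1) < σ i → ∀ x,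
      ecaAsync n r σ x i = false := by
    intro σ hσ x
    rw [ecaAsync_eq n r σ x i, if_pos hσ, ecaAsync_eq n r σ x (i + 1)]
    have hi : i + 1 - 1 = i := by ring
    rw [hi, if_neg (by omega : ¬ σ i < σ (i + 1))]
    cases x i <;> simp [hr]
  funext x
  funext j
  have key : ∀ k j, τ j ≤ k → ecaAsync n r τ x j = ecaAsync n r τ' x j := by
    intro k
    induction k using Nat.strong_induction_on with
    | _ k ih =>
      intro j hj
      by_cases hji : j = i
      · subst hji; rw [hfalse τ hA x, hfalse τ' hA' x]
      · have hLlab := h3 (j - 1) j (Or.inl (by ring))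
          (by intro hc; exact hji (congrArg Prod.snd hc))
        have hRlab := h3 (j + 1) j (Or.inr (by ring))
          (by intro hc; exact hji (congrArg Prod.snd hc))
        simp only [lab, decide_eq_decide] at hLlab hRlab
        have hL : (τ (j - 1) < τ j) ↔ (τ' (j - 1) < τ' j) := by omega
        have hR : (τ (j + 1) < τ j) ↔ (τ' (j + 1) < τ' j) := by omega
        rw [ecaAsync_eq n r τ x j, ecaAsync_eq n r τ' x j]
        have ha : (if τ (j - 1) < τ j then ecaAsync n r τ x (j - 1) else x (j - 1))
            = (if τ' (j - 1) < τ' j then ecaAsync n r τ' x (j - 1) else x (j - 1)) := by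
          by_cases hl : τ (j - 1) < τ j
          · rw [if_pos hl, if_pos (hL.mp hl)]
            exact ih (τ (j - 1)) (by omega) (j - 1) le_rfl
          · rw [if_neg hl, if_neg (fun hc => hl (hL.mpr hc))]
        have hc : (if τ (j + 1) < τ j then ecaAsync n r τ x (j + 1) else x (j + 1))
            = (if τ' (j + 1) < τ' j then ecaAsync n r τ' x (j + 1) else x (j + 1)) := by
          by_cases hl : τ (j + 1) < τ j
          · rw [if_pos hl, if_pos (hR.mp hl)]
            exact ih (τ (j + 1)) (by omega) (j + 1) le_rfl
          · rw [if_neg hl, if_neg (fun hc => hl (hR.mpr hc))]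
        rw [ha, hc]
  exact key (τ j) j le_rfl
end

section
/- For the ECA rule 8, with local rule h(a,b,c) = ¬a ∧ b ∧ c, and for every n ≥ 5: the number of distinct asynchronous global functions, i.e. the cardinality of { f^{(τ)} : τ a block-sequential update schedule on ℤ/nℤ }, equals L(2n) − 2^n, where L is the Lucas sequence (L(0) = 2, L(1) = 1, L(k+2) = L(k+1) + L(k)); equivalently it equals φ^{2n} + φ^{−2n} − 2^n with φ = (1+√5)/2 the golden ratio. -/
/-- The Lucas sequence: L(0)=2, L(1)=1, L(k+2)=L(k+1)+L(k). -/
def lucas : ℕ → ℕ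
  | 0 => 2
  | 1 => 1
  | k + 2 => lucas (k + 1) + lucas k

namespace R8

def rule8 : Bool → Bool → Bool → Bool := fun a b c => !a && b && c

variable {n : ℕ}

def kk (n : ℕ) (τ : ZMod n → ℕ) (i : ZMod n) : ℕ :=
  if h : τ (i - 1) < τ i then kk n τ (i - 1) + 1 else 0
termination_by τ i
decreasing_by exact h

lemma kk_eq (τ : ZMod n → ℕ) (i : ZMod n) :
    kk n τ i = if τ (i - 1) < τ i then kk n τ (i - 1) + 1 else 0 := by
  rw [kk]; split_ifs with h <;> simp [h]

def Phi (n : ℕ) (τ : ZMod n → ℕ) : ZMod n → Option ℕ :=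
  fun i => if τ (i + 1) < τ i then none else some (kk n τ i)

def g (n : ℕ) : ℕ → (ZMod n → Bool) → ZMod n → Bool
  | 0, x, i => !x (i - 1) && x i && x (i + 1)
  | k + 1, x, i => !(g n k x (i - 1)) && x i && x (i + 1)

def G (n : ℕ) (σ : ZMod n → Option ℕ) (x : ZMod n → Bool) (i : ZMod n) : Bool :=
  (σ i).elim false (fun k => g n k x i)

lemma upTo_eq (h : Bool → Bool → Bool → Bool) (τ : ZMod n → ℕ) (k : ℕ)
    (x : ZMod n → Bool) (j : ZMod n) :
    ecaUpTo n h τ k x j = if τ j ≤ k then ecaUpTo n h τ (τ j) x j else x j := by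
  induction k with
  | zero =>
    by_cases h0 : τ j = 0
    · simp [h0]
    · simp [ecaUpTo, ecaStep, h0, Nat.le_zero]
  | succ k ih =>
    by_cases hj : τ j = k + 1
    · simp [hj]
    · have hstep : ecaUpTo n h τ (k + 1) x j = ecaUpTo n h τ k x j := by
        show ecaStep n h τ (k+1) (ecaUpTo n h τ k x) j = _
        simp [ecaStep, hj]
      rw [hstep, ih]
      by_cases hk : τ j ≤ k
      · simp [hk, hk.trans (Nat.le_succ k)]
      · have h2 : ¬ τ j ≤ k + 1 := by omega
        simp [hk, h2]

lemma async_eq (h : Bool → Bool → Bool → Bool) (τ : ZMod n → ℕ) (x : ZMod n → Bool)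
    (i : ZMod n) :
    ecaAsync n h τ x i =
      h (if τ (i-1) < τ i then ecaAsync n h τ x (i-1) else x (i-1))
        (x i)
        (if τ (i+1) < τ i then ecaAsync n h τ x (i+1) else x (i+1)) := by
  cases hk : τ i with
  | zero =>
    show ecaUpTo n h τ (τ i) x i = _
    rw [hk]
    show ecaStep n h τ 0 x i = _
    simp [ecaStep, hk]
  | succ k =>
    show ecaUpTo n h τ (τ i) x i = _
    rw [hk]
    show ecaStep n h τ (k+1) (ecaUpTo n h τ k x) i = _
    unfold ecaStep
    rw [if_pos hk]
    rw [upTo_eq h τ k x (i-1), upTo_eq h τ k x i, upTo_eq h τ k x (i+1)]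
    have hii : ¬ τ i ≤ k := by omega
    simp only [hii, if_false, Nat.lt_succ_iff]
    rfl

lemma async_none (τ : ZMod n → ℕ) (x : ZMod n → Bool) (i : ZMod n)
    (hlt : τ (i+1) < τ i) : ecaAsync n rule8 τ x i = false := by
  rw [async_eq, if_pos hlt, async_eq rule8 τ x (i+1)]
  have h1 : ¬ τ ((i+1) - 1) < τ (i+1) := by
    rw [add_sub_cancel_right]; omega
  rw [if_neg h1, add_sub_cancel_right]
  cases x i <;> simp [rule8]

lemma async_eq_G (τ : ZMod n → ℕ) (x : ZMod n → Bool) (i : ZMod n) :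
    ecaAsync n rule8 τ x i = G n (Phi n τ) x i := by
  suffices H : ∀ m (i : ZMod n), τ i ≤ m → ecaAsync n rule8 τ x i = G n (Phi n τ) x i from
    H (τ i) i le_rfl
  intro m
  induction m with
  | zero =>
    intro i hi
    by_cases hR : τ (i+1) < τ i
    · rw [async_none τ x i hR]; simp [G, Phi, hR]
    · have hL : ¬ τ (i-1) < τ i := by omega
      rw [async_eq, if_neg hL, if_neg hR]
      have : kk n τ i = 0 := by rw [kk_eq, if_neg hL]
      simp [G, Phi, hR, this, g, rule8]
  | succ m ih =>
    intro i hi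
    by_cases hR : τ (i+1) < τ i
    · rw [async_none τ x i hR]; simp [G, Phi, hR]
    · rw [async_eq, if_neg hR]
      by_cases hL : τ (i-1) < τ i
      · rw [if_pos hL]
        have hmem : τ (i-1) ≤ m := by omega
        rw [ih (i-1) hmem]
        have hL' : ¬ τ ((i-1)+1) < τ (i-1) := by rw [sub_add_cancel]; omega
        have hkk : kk n τ i = kk n τ (i-1) + 1 := by rw [kk_eq, if_pos hL]
        show rule8 (G n (Phi n τ) x (i-1)) (x i) (x (i+1)) = G n (Phi n τ) x i
        simp only [G, Phi, if_neg hR, if_neg hL', hkk, Option.elim_some]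
        rfl
      · rw [if_neg hL]
        have : kk n τ i = 0 := by rw [kk_eq, if_neg hL]
        simp [G, Phi, hR, this, g, rule8]

def Sset (n : ℕ) : Set (ZMod n → Option ℕ) :=
  {σ | (∀ i k, σ i = some (k + 1) → σ (i - 1) = some k) ∧
       (∃ i, σ i ≠ none) ∧
       ((∃ i, σ i = none) ∨ σ = fun _ => some 0)}

lemma cyc_const [NeZero n] (τ : ZMod n → ℕ) (hmono : ∀ i : ZMod n, τ i ≤ τ (i+1)) :
    ∀ i j : ZMod n, τ i = τ j := by
  have key : ∀ (k : ℕ) (i : ZMod n), τ i ≤ τ (i + (k : ZMod n)) := by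
    intro k
    induction k with
    | zero => intro i; simp
    | succ k ih =>
      intro i
      have h1 := ih i
      have h2 := hmono (i + (k : ZMod n))
      have hc : ((k+1 : ℕ) : ZMod n) = (k : ZMod n) + 1 := by push_cast; ring
      rw [hc, ← add_assoc]
      exact le_trans h1 h2
  have le : ∀ i j : ZMod n, τ i ≤ τ j := by
    intro i j
    have := key ((j - i).val) i
    rwa [ZMod.natCast_val, ZMod.cast_id, add_sub_cancel] at this
  intro i j
  exact le_antisymm (le i j) (le j i)

lemma phi_mem_Sset [NeZero n] (τ : ZMod n → ℕ) : Phi n τ ∈ Sset n := by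
  refine ⟨?_, ?_, ?_⟩
  · intro i k h
    simp only [Phi] at h ⊢
    by_cases hR : τ (i + 1) < τ i
    · rw [if_pos hR] at h; exact absurd h (by simp)
    · rw [if_neg hR] at h
      have h' : kk n τ i = k + 1 := Option.some_injective _ h
      rw [kk_eq] at h'
      by_cases hL : τ (i - 1) < τ i
      · rw [if_pos hL] at h'
        have hcond : ¬ τ ((i-1)+1) < τ (i-1) := by rw [sub_add_cancel]; omega
        rw [if_neg hcond]
        exact congrArg some (by omega)
      · rw [if_neg hL] at h'; omega
  · obtain ⟨i₀, -, hmin⟩ := Finset.exists_min_image Finset.univ τ ⟨0, Finset.mem_univ 0⟩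
    refine ⟨i₀, ?_⟩
    simp only [Phi]
    have : ¬ τ (i₀ + 1) < τ i₀ := not_lt.2 (hmin _ (Finset.mem_univ _))
    simp [this]
  · by_cases hne : ∃ i, Phi n τ i = none
    · exact Or.inl hne
    · push_neg at hne
      right
      have hmono : ∀ i : ZMod n, τ i ≤ τ (i+1) := by
        intro i
        have h := hne i
        simp only [Phi] at h
        by_contra hc
        rw [if_pos (by omega)] at h
        exact h rfl
      have hconst := cyc_const τ hmono
      funext i
      have hkk : kk n τ i = 0 := by
        rw [kk_eq, if_neg (by rw [hconst (i-1) i]; exact lt_irrefl _)]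
      simp [Phi, hkk, not_lt.2 (hmono i)]

lemma natCast_ne_zero [NeZero n] {m : ℕ} (h1 : 1 ≤ m) (h2 : m < n) : (m : ZMod n) ≠ 0 := by
  intro h
  have h' := congrArg ZMod.val h
  rw [ZMod.val_natCast, ZMod.val_zero, Nat.mod_eq_of_lt h2] at h'
  omega

lemma cast_ne_cast [NeZero n] {a b : ℕ} (hab : a < b) (hb : b - a < n) :
    (a : ZMod n) ≠ (b : ZMod n) := by
  intro h
  refine natCast_ne_zero (n := n) (m := b - a) (by omega) hb ?_
  push_cast [Nat.cast_sub hab.le]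
  rw [← h]; ring

def zed (p : ZMod n) : ZMod n → Bool := fun j => decide (j ≠ p)

lemma zed_apply_true {p j : ZMod n} (h : j ≠ p) : zed p j = true := by simp [zed, h]

lemma zed_apply_false {p : ZMod n} : zed p p = false := by simp [zed]

lemma ne_sub_of_cast {i : ZMod n} {m : ℕ} (h : (m : ZMod n) ≠ 0) : i ≠ i - (m : ZMod n) := by
  intro hc
  exact h (sub_eq_self.mp hc.symm)

lemma sub_one_ne {i : ZMod n} {m : ℕ} (h : (m : ZMod n) ≠ 1) : i - 1 ≠ i - (m : ZMod n) := by
  intro hc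
  exact h (sub_right_inj.mp hc).symm

lemma add_one_ne {i : ZMod n} {m : ℕ} (h : ((m + 1 : ℕ) : ZMod n) ≠ 0) :
    i + 1 ≠ i - (m : ZMod n) := by
  intro hc
  apply h
  rw [sub_eq_add_neg] at hc
  have h1 : (1 : ZMod n) = -(m : ZMod n) := add_left_cancel hc
  push_cast
  rw [add_comm, h1, neg_add_cancel]

lemma not_decide_parity (k : ℕ) : (!decide (k % 2 = 1)) = decide ((k + 1) % 2 = 1) := by
  rcases Nat.mod_two_eq_zero_or_one k with h | h
  · have h2 : (k+1) % 2 = 1 := by omega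
    simp [h, h2]
  · have h2 : (k+1) % 2 ≠ 1 := by omega
    simp [h, h2]

lemma g_self {k : ℕ} {x : ZMod n → Bool} {i : ZMod n} (h : g n k x i = true) : x i = true := by
  cases k <;> (simp only [g, Bool.and_eq_true] at h; exact h.1.2)

lemma g_true (k : ℕ) (x : ZMod n → Bool) (i : ZMod n) (h1 : x (i-1) = false)
    (h2 : x i = true) (h3 : x (i+1) = true) : g n k x i = true := by
  cases k with
  | zero => simp [g, h1, h2, h3]
  | succ k =>
    have hf : g n k x (i-1) = false := by
      by_contra hc
      rw [Bool.not_eq_false] at hc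
      rw [g_self hc] at h1
      exact Bool.noConfusion h1
    simp [g, hf, h2, h3]

lemma g_ones (k : ℕ) (i : ZMod n) : g n k (fun _ => true) i = decide (k % 2 = 1) := by
  induction k generalizing i with
  | zero => simp [g]
  | succ k ih =>
    simp only [g, ih (i-1), Bool.and_true]
    exact not_decide_parity k

lemma g_far [NeZero n] (hn5 : 5 ≤ n) :
    ∀ (k m : ℕ) (i : ZMod n), k + 2 ≤ m → m ≤ n - 2 →
      g n k (zed (i - (m : ZMod n))) i = decide (k % 2 = 1) := by
  intro k
  induction k with
  | zero =>
    intro m i h2 h3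
    have hx1 : zed (i - (m:ZMod n)) (i-1) = true := by
      refine zed_apply_true (sub_one_ne ?_)
      intro hc
      exact cast_ne_cast (n := n) (a := 1) (b := m) (by omega) (by omega)
        (by rw [Nat.cast_one]; exact hc.symm)
    simp [g, hx1]
  | succ k ih =>
    intro m i h2 h3
    have hm1 : i - (m : ZMod n) = (i - 1) - ((m - 1 : ℕ) : ZMod n) := by
      rw [Nat.cast_sub (show 1 ≤ m by omega)]
      push_cast
      ring
    have hrec : g n k (zed (i - (m:ZMod n))) (i-1) = decide (k % 2 = 1) := by
      rw [hm1]
      exact ih (m-1) (i-1) (by omega) (by omega)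
    have hx2 : zed (i - (m:ZMod n)) i = true :=
      zed_apply_true (ne_sub_of_cast (natCast_ne_zero (by omega) (by omega)))
    have hx3 : zed (i - (m:ZMod n)) (i+1) = true :=
      zed_apply_true (add_one_ne (natCast_ne_zero (by omega) (by omega)))
    simp only [g, hrec, hx2, hx3, Bool.and_true]
    exact not_decide_parity k

lemma g_near [NeZero n] (hn5 : 5 ≤ n) :
    ∀ (m k : ℕ) (i : ZMod n), 1 ≤ m → m ≤ k + 1 → m ≤ n - 2 →
      g n k (zed (i - (m : ZMod n))) i = decide (m % 2 = 1) := by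
  intro m
  induction m with
  | zero => intro k i h1; omega
  | succ m ih =>
    intro k i _ h2 h3
    have hx2 : zed (i - ((m+1 : ℕ):ZMod n)) i = true :=
      zed_apply_true (ne_sub_of_cast (natCast_ne_zero (by omega) (by omega)))
    have hx3 : zed (i - ((m+1 : ℕ):ZMod n)) (i+1) = true :=
      zed_apply_true (add_one_ne (natCast_ne_zero (by omega) (by omega)))
    by_cases hm : m = 0
    · subst hm
      have hx1 : zed (i - ((0+1 : ℕ):ZMod n)) (i-1) = false := by
        have : i - ((0+1 : ℕ) : ZMod n) = i - 1 := by norm_num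
        rw [this]
        exact zed_apply_false
      rw [g_true _ _ _ hx1 hx2 hx3]
      norm_num
    · cases k with
      | zero => omega
      | succ k =>
        have hm1 : i - ((m+1:ℕ) : ZMod n) = (i - 1) - ((m : ℕ) : ZMod n) := by
          push_cast
          ring
        have hrec : g n k (zed (i - ((m+1:ℕ):ZMod n))) (i-1) = decide (m % 2 = 1) := by
          rw [hm1]
          exact ih k (i-1) (by omega) (by omega) (by omega)
        simp only [g, hrec, hx2, hx3, Bool.and_true]
        exact not_decide_parity m

lemma g_ne [NeZero n] (hn5 : 5 ≤ n) {k k' : ℕ} (hkk : k < k') (hk' : k' ≤ n - 2)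
    (hok : k ≤ n - 5 ∨ k % 2 ≠ k' % 2) (i : ZMod n) :
    ∃ x : ZMod n → Bool, g n k x i ≠ g n k' x i := by
  by_cases hp : k % 2 = k' % 2
  · have hks : k ≤ n - 5 := by
      rcases hok with h | h
      · exact h
      · exact absurd hp h
    refine ⟨zed (i - ((k+3 : ℕ) : ZMod n)), ?_⟩
    rw [g_far hn5 k (k+3) i (by omega) (by omega),
        g_near hn5 (k+3) k' i (by omega) (by omega) (by omega)]
    simp only [ne_eq, decide_eq_decide]
    omega
  · refine ⟨fun _ => true, ?_⟩
    rw [g_ones, g_ones]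
    simp only [ne_eq, decide_eq_decide]
    omega

lemma Sset_chain {σ : ZMod n → Option ℕ} (hσ : σ ∈ Sset n) {i : ZMod n} {k : ℕ}
    (h : σ i = some k) : ∀ t, t ≤ k → σ (i - (t : ZMod n)) = some (k - t) := by
  intro t
  induction t with
  | zero => intro _; simpa using h
  | succ t ih =>
    intro ht
    have h1 : σ (i - (t:ZMod n)) = some (k - t) := ih (by omega)
    have h2 : k - t = (k - (t+1)) + 1 := by omega
    rw [h2] at h1
    have h3 := hσ.1 _ _ h1
    have hcast : i - (t:ZMod n) - 1 = i - ((t+1 : ℕ) : ZMod n) := by push_cast; ring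
    rwa [hcast] at h3

lemma Sset_bound [NeZero n] {σ : ZMod n → Option ℕ} (hσ : σ ∈ Sset n) {i : ZMod n} {k : ℕ}
    (h : σ i = some k) : k ≤ n - 2 := by
  have hn1 : 1 ≤ n := Nat.one_le_iff_ne_zero.mpr (NeZero.ne n)
  rcases hσ.2.2 with ⟨j, hj⟩ | hconst
  · by_contra hlt
    set t := (i - j).val with ht
    have htk : t ≤ k := by
      have := ZMod.val_lt (i - j)
      omega
    have hc := Sset_chain hσ h t htk
    rw [ht, ZMod.natCast_val, ZMod.cast_id, sub_sub_cancel] at hc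
    rw [hj] at hc
    exact nomatch hc
  · have h0 : σ i = some 0 := by rw [hconst]
    rw [h] at h0
    have := Option.some_injective _ h0
    omega

lemma G_none_some [NeZero n] (hn5 : 5 ≤ n) {σ σ' : ZMod n → Option ℕ}
    (hG : G n σ = G n σ') {i : ZMod n} {k : ℕ} (h1 : σ i = none) (h2 : σ' i = some k) :
    False := by
  have hx := congrFun (congrFun hG (zed (i-1))) i
  simp only [G, h1, h2, Option.elim_none, Option.elim_some] at hx
  have e1 : zed (i-1) (i-1) = false := zed_apply_false
  have e2 : zed (i-1) i = true := by
    refine zed_apply_true ?_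
    have : i - 1 = i - ((1:ℕ) : ZMod n) := by norm_num
    rw [this]
    exact ne_sub_of_cast (natCast_ne_zero (by omega) (by omega))
  have e3 : zed (i-1) (i+1) = true := by
    refine zed_apply_true ?_
    have : i - 1 = i - ((1:ℕ) : ZMod n) := by norm_num
    rw [this]
    exact add_one_ne (natCast_ne_zero (by omega) (by omega))
  rw [g_true k _ i e1 e2 e3] at hx
  exact Bool.noConfusion hx

lemma G_some_some [NeZero n] (hn5 : 5 ≤ n) {σ σ' : ZMod n → Option ℕ}
    (hσ : σ ∈ Sset n) (hσ' : σ' ∈ Sset n) (hG : G n σ = G n σ') {i : ZMod n} {a b : ℕ}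
    (ha : σ i = some a) (hb : σ' i = some b) (hab : a < b) : False := by
  have hss : ∀ {j : ZMod n} {c d : ℕ}, σ j = some c → σ' j = some d → c < d →
      (c ≤ n - 5 ∨ c % 2 ≠ d % 2) → False := by
    intro j c d hc hd hcd hok
    obtain ⟨x, hx⟩ := g_ne hn5 hcd (Sset_bound hσ' hd) hok j
    apply hx
    have h1 := congrFun (congrFun hG x) j
    simpa only [G, hc, hd, Option.elim_some] using h1
  by_cases hok : a ≤ n - 5 ∨ a % 2 ≠ b % 2
  · exact hss ha hb hab hok
  · push_neg at hok
    have hb2 : b ≤ n - 2 := Sset_bound hσ' hb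
    have hba : a + 2 ≤ b := by omega
    have hc1 : σ (i - ((1:ℕ):ZMod n)) = some (a - 1) := Sset_chain hσ ha 1 (by omega)
    have hc2 : σ' (i - ((1:ℕ):ZMod n)) = some (b - 1) := Sset_chain hσ' hb 1 (by omega)
    exact hss hc1 hc2 (by omega) (Or.inl (by omega))

lemma G_injOn [NeZero n] (hn5 : 5 ≤ n) : Set.InjOn (G n) (Sset n) := by
  intro σ hσ σ' hσ' hG
  funext i
  rcases h1 : σ i with _ | a <;> rcases h2 : σ' i with _ | b
  · rfl
  · exact (G_none_some hn5 hG h1 h2).elim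
  · exact (G_none_some hn5 hG.symm h2 h1).elim
  · rcases lt_trichotomy a b with hab | hab | hab
    · exact (G_some_some hn5 hσ hσ' hG h1 h2 hab).elim
    · rw [hab]
    · exact (G_some_some hn5 hσ' hσ hG.symm h2 h1 hab).elim

def walk (σ : ZMod n → Option ℕ) (i₀ : ZMod n) : ℕ → ℕ
  | 0 => n
  | m + 1 =>
    if σ (i₀ + 1 + (m : ZMod n)) = none then walk σ i₀ m - 1
    else if σ (i₀ + 1 + (m : ZMod n) + 1) = some 0 then walk σ i₀ m
    else walk σ i₀ m + n

lemma walk_ge (σ : ZMod n → Option ℕ) (i₀ : ZMod n) : ∀ m, n ≤ walk σ i₀ m + m := by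
  intro m
  induction m with
  | zero => simp [walk]
  | succ m ih =>
    have hcases : walk σ i₀ (m+1) = walk σ i₀ m - 1 ∨ walk σ i₀ (m+1) = walk σ i₀ m ∨
        walk σ i₀ (m+1) = walk σ i₀ m + n := by
      simp only [walk]
      split_ifs <;> tauto
    omega

lemma walk_big (σ : ZMod n → Option ℕ) (i₀ : ZMod n) (m₀ : ℕ)
    (h1 : σ (i₀ + 1 + (m₀ : ZMod n)) ≠ none)
    (h2 : σ (i₀ + 1 + (m₀ : ZMod n) + 1) ≠ some 0) :
    ∀ m, m₀ < m → m ≤ n → 2*n + 1 ≤ walk σ i₀ m + m := by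
  intro m
  induction m with
  | zero => omega
  | succ m ih =>
    intro hlt hle
    by_cases hm : m₀ = m
    · subst hm
      have hw : walk σ i₀ (m₀+1) = walk σ i₀ m₀ + n := by
        simp only [walk]
        rw [if_neg h1, if_neg h2]
      have := walk_ge σ i₀ m₀
      omega
    · have hih := ih (by omega) (by omega)
      have hcases : walk σ i₀ (m+1) = walk σ i₀ m - 1 ∨ walk σ i₀ (m+1) = walk σ i₀ m ∨
          walk σ i₀ (m+1) = walk σ i₀ m + n := by
        simp only [walk]
        split_ifs <;> tauto
      omega

lemma val_add_one [NeZero n] {u : ZMod n} (h : u.val < n - 1) : (u + 1).val = u.val + 1 := by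
  have h1 : 1 < n := by have := ZMod.val_lt u; omega
  haveI : Fact (1 < n) := ⟨h1⟩
  rw [ZMod.val_add, ZMod.val_one]
  exact Nat.mod_eq_of_lt (by omega)

lemma mval_lt [NeZero n] (hn1 : 1 ≤ n) {e i₀ : ZMod n} (hne : e ≠ i₀) :
    (e - (i₀+1)).val < n - 1 := by
  have h1 := ZMod.val_lt (e - (i₀+1))
  by_contra hc
  have h2 : (e - (i₀+1)).val = n - 1 := by omega
  apply hne
  have h3 : e - (i₀ + 1) = ((n-1 : ℕ) : ZMod n) := by
    rw [← h2, ZMod.natCast_val, ZMod.cast_id]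
  have hcast : ((n-1 : ℕ) : ZMod n) = -1 := by
    rw [Nat.cast_sub (by omega), ZMod.natCast_self, Nat.cast_one, zero_sub]
  rw [hcast] at h3
  have h4 : e = -1 + (i₀ + 1) := sub_eq_iff_eq_add.mp h3
  rw [h4]; ring

lemma exists_tau [NeZero n] (hn5 : 5 ≤ n) {σ : ZMod n → Option ℕ} (hσ : σ ∈ Sset n) :
    ∃ τ : ZMod n → ℕ, Phi n τ = σ := by
  rcases hσ.2.2 with ⟨i₀, hi₀⟩ | hconst
  case inr =>
    refine ⟨fun _ => 0, funext fun i => ?_⟩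
    rw [hconst]
    have hkk0 : kk n (fun _ => (0:ℕ)) i = 0 := by
      rw [kk_eq, if_neg (lt_irrefl 0)]
    simp [Phi, hkk0]
  case inl =>
    obtain ⟨j₀, hj₀⟩ := hσ.2.1
    set τ : ZMod n → ℕ := fun j => walk σ i₀ ((j - (i₀+1)).val) with hτdef
    -- existence of an LT edge
    have hexP : ∃ t : ℕ, σ (j₀ + ((t+1 : ℕ) : ZMod n)) = none := by
      have hne : i₀ ≠ j₀ := fun hc => hj₀ (hc ▸ hi₀)
      have hval : 1 ≤ (i₀ - j₀).val := by
        rcases Nat.eq_zero_or_pos (i₀ - j₀).val with h | h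
        · exact absurd (sub_eq_zero.mp ((ZMod.val_eq_zero _).mp h)) hne
        · exact h
      refine ⟨(i₀ - j₀).val - 1, ?_⟩
      have heq : ((i₀ - j₀).val - 1 + 1 : ℕ) = (i₀ - j₀).val := by omega
      rw [heq, ZMod.natCast_val, ZMod.cast_id,
        show j₀ + (i₀ - j₀) = i₀ from by ring]
      exact hi₀
    set t₀ := Nat.find hexP with ht₀
    set eL : ZMod n := j₀ + (t₀ : ZMod n) with heL
    have heL1 : σ (eL + 1) = none := by
      have := Nat.find_spec hexP
      rw [heL]
      rw [show j₀ + (t₀ : ZMod n) + 1 = j₀ + ((t₀ + 1 : ℕ) : ZMod n) by push_cast; ring]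
      exact this
    have heLs : σ eL ≠ none := by
      rcases Nat.eq_zero_or_pos t₀ with h | h
      · rw [heL, h]
        simpa using hj₀
      · have hmin := Nat.find_min hexP (m := t₀ - 1) (by omega)
        rw [show (t₀ - 1 + 1 : ℕ) = t₀ by omega] at hmin
        exact hmin
    have heLi₀ : eL ≠ i₀ := by
      intro hc; rw [hc, hi₀] at heLs; exact heLs rfl
    set m₀ := (eL - (i₀+1)).val with hm₀def
    have hm₀lt : m₀ < n - 1 := mval_lt (by omega) heLi₀
    have hpos : i₀ + 1 + ((m₀ : ℕ) : ZMod n) = eL := by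
      rw [hm₀def, ZMod.natCast_val, ZMod.cast_id]; ring
    have hbig := walk_big σ i₀ m₀ (by rw [hpos]; exact heLs)
      (by rw [hpos, heL1]; simp)
    -- walk unfolding along edges
    have hwalk_at : ∀ e : ZMod n, e ≠ i₀ →
        τ (e + 1) = if σ e = none then τ e - 1
          else if σ (e+1) = some 0 then τ e else τ e + n := by
      intro e he
      have hm : (e - (i₀+1)).val < n - 1 := mval_lt (by omega) he
      have h1 : (e+1) - (i₀+1) = (e - (i₀+1)) + 1 := by ring
      have hpos' : i₀ + 1 + (((e - (i₀+1)).val : ℕ) : ZMod n) = e := by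
        rw [ZMod.natCast_val, ZMod.cast_id]; ring
      show walk σ i₀ (((e+1) - (i₀+1)).val) = _
      rw [h1, val_add_one hm]
      show walk σ i₀ ((e - (i₀+1)).val + 1) = _
      simp only [walk, hpos']
      rfl
    have hτi₀1 : τ (i₀ + 1) = n := by
      show walk σ i₀ (((i₀+1) - (i₀+1)).val) = n
      rw [sub_self, ZMod.val_zero]
      rfl
    have hτi₀ : n + 1 ≤ τ i₀ := by
      have hm : (i₀ - (i₀+1)).val = n - 1 := by
        have h3 : i₀ - (i₀ + 1) = -1 := by ring
        have hc : (-1 : ZMod n) = ((n-1 : ℕ) : ZMod n) := by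
          rw [Nat.cast_sub (by omega), ZMod.natCast_self, Nat.cast_one, zero_sub]
        rw [h3, hc, ZMod.val_natCast, Nat.mod_eq_of_lt (by omega)]
      show n + 1 ≤ walk σ i₀ ((i₀ - (i₀+1)).val)
      rw [hm]
      have := hbig (n-1) (by omega) (by omega)
      omega
    have hrel : ∀ e : ZMod n,
        (σ e = none → τ (e+1) < τ e) ∧
        (σ e ≠ none → σ (e+1) = some 0 → τ (e+1) = τ e) ∧
        (σ e ≠ none → σ (e+1) ≠ some 0 → τ e < τ (e+1)) := by
      intro e
      by_cases he : e = i₀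
      · subst he
        exact ⟨fun _ => by rw [hτi₀1]; omega,
               fun hne _ => absurd hi₀ hne,
               fun hne _ => absurd hi₀ hne⟩
      · have hw := hwalk_at e he
        have hge : n ≤ τ e + (e - (i₀+1)).val := walk_ge σ i₀ _
        have hmlt : (e - (i₀+1)).val < n - 1 := mval_lt (by omega) he
        refine ⟨?_, ?_, ?_⟩
        · intro h; rw [hw, if_pos h]; omega
        · intro h1 h2; rw [hw, if_neg h1, if_pos h2]
        · intro h1 h2; rw [hw, if_neg h1, if_neg h2]; omega
    have hkk : ∀ k, ∀ i : ZMod n, σ i = some k → kk n τ i = k := by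
      intro k
      induction k with
      | zero =>
        intro i hi
        rw [kk_eq]
        rcases h' : σ (i-1) with _ | c
        · have hlt := (hrel (i-1)).1 h'
          rw [sub_add_cancel] at hlt
          rw [if_neg (by omega)]
        · have heq := (hrel (i-1)).2.1 (by rw [h']; simp) (by rw [sub_add_cancel, hi])
          rw [sub_add_cancel] at heq
          rw [if_neg (by omega)]
      | succ k ih =>
        intro i hi
        have hprev : σ (i-1) = some k := hσ.1 i k hi
        have hlt : τ (i-1) < τ i := by
          have := (hrel (i-1)).2.2 (by rw [hprev]; simp)
            (by rw [sub_add_cancel, hi]; simp)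
          rwa [sub_add_cancel] at this
        rw [kk_eq, if_pos hlt, ih (i-1) hprev]
    refine ⟨τ, funext fun i => ?_⟩
    rcases h' : σ i with _ | k
    · simp [Phi, (hrel i).1 h']
    · have hns : ¬ τ (i+1) < τ i := by
        rcases h'' : σ (i+1) with _ | c
        · have := (hrel i).2.2 (by rw [h']; simp) (by rw [h'']; simp)
          omega
        · cases c with
          | zero =>
            have := (hrel i).2.1 (by rw [h']; simp) (by rw [h''])
            omega
          | succ c =>
            have := (hrel i).2.2 (by rw [h']; simp) (by rw [h'']; simp)
            omega
      simp [Phi, hns, hkk k i h']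

def w : Bool → Bool → ℕ := fun a b => if a = false ∧ b = false then 2 else 1

def cp (a b : Bool) : ℕ → (ℕ → Bool) → ℕ
  | 0, _ => w a b
  | m+1, f => w a (f 0) * cp (f 0) b m (fun j => f (j+1))

def pathSum (a b : Bool) : ℕ → ℕ
  | 0 => w a b
  | m+1 => w a false * pathSum false b m + w a true * pathSum true b m

lemma cp_congr : ∀ (m : ℕ) (a b : Bool) (f f' : ℕ → Bool),
    (∀ j < m, f j = f' j) → cp a b m f = cp a b m f' := by
  intro m
  induction m with
  | zero => intros; rfl
  | succ m ih =>
    intro a b f f' h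
    have h0 : f 0 = f' 0 := h 0 (by omega)
    simp only [cp, h0]
    rw [ih _ _ _ _ (fun j hj => h (j+1) (by omega))]

def ext (m : ℕ) (f : Fin m → Bool) : ℕ → Bool :=
  fun j => if h : j < m then f ⟨j, h⟩ else false

lemma sum_cp : ∀ (m : ℕ) (a b : Bool),
    (∑ f : Fin m → Bool, cp a b m (ext m f)) = pathSum a b m := by
  intro m
  induction m with
  | zero =>
    intro a b
    show ∑ _f : Fin 0 → Bool, w a b = w a b
    rw [Finset.sum_const, Finset.card_univ]
    simp
  | succ m ih =>
    intro a b
    rw [← Equiv.sum_comp (Fin.consEquiv (fun _ : Fin (m+1) => Bool))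
      (fun f => cp a b (m+1) (ext (m+1) f))]
    rw [Fintype.sum_prod_type]
    have key : ∀ (c : Bool) (f : Fin m → Bool),
        cp a b (m+1) (ext (m+1) ((Fin.consEquiv (fun _ : Fin (m+1) => Bool)) (c, f)))
          = w a c * cp c b m (ext m f) := by
      intro c f
      have h0 : ext (m+1) (Fin.cons c f) 0 = c := by simp [ext]
      show w a (ext (m+1) (Fin.cons c f) 0) *
          cp (ext (m+1) (Fin.cons c f) 0) b m (fun j => ext (m+1) (Fin.cons c f) (j+1)) = _
      rw [h0]
      congr 1
      apply cp_congr
      intro j hj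
      have hj1 : j + 1 < m + 1 := by omega
      simp only [ext, dif_pos hj1, dif_pos hj]
      exact Fin.cons_succ (α := fun _ => Bool) c f ⟨j, hj⟩
    simp_rw [key]
    simp_rw [← Finset.mul_sum]
    simp_rw [ih]
    rw [Fintype.sum_bool]
    show w a true * pathSum true b m + w a false * pathSum false b m = pathSum a b (m+1)
    simp only [pathSum]
    ring

lemma pathSum_fib (m : ℕ) :
    pathSum false false m = Nat.fib (2*m+3) ∧
    pathSum false true m = Nat.fib (2*m+2) ∧
    pathSum true false m = Nat.fib (2*m+2) ∧
    pathSum true true m + Nat.fib (2*m+2) = Nat.fib (2*m+3) := by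
  induction m with
  | zero =>
    refine ⟨?_, ?_, ?_, ?_⟩ <;> simp [pathSum, w] <;> decide
  | succ m ih =>
    obtain ⟨h1, h2, h3, h4⟩ := ih
    have e1 : Nat.fib (2*m+4) = Nat.fib (2*m+3) + Nat.fib (2*m+2) := by
      rw [show 2*m+4 = (2*m+2)+2 by ring, Nat.fib_add_two,
        show 2*m+2+1 = 2*m+3 by ring]
      omega
    have e2 : Nat.fib (2*m+5) = Nat.fib (2*m+4) + Nat.fib (2*m+3) := by
      rw [show 2*m+5 = (2*m+3)+2 by ring, Nat.fib_add_two,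
        show 2*m+3+1 = 2*m+4 by ring]
      omega
    refine ⟨?_, ?_, ?_, ?_⟩ <;>
      (simp only [pathSum, show 2*(m+1)+2 = 2*m+4 from by ring,
        show 2*(m+1)+3 = 2*m+5 from by ring]; norm_num [w]; omega)

lemma lucas_succ_eq : ∀ j, lucas (j+1) = Nat.fib j + Nat.fib (j+2)
  | 0 => by decide
  | 1 => by decide
  | (j+2) => by
    show lucas (j+3) = Nat.fib (j+2) + Nat.fib (j+4)
    have ha : lucas (j+2) = Nat.fib (j+1) + Nat.fib (j+3) := by
      have h := lucas_succ_eq (j+1)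
      rwa [show j+1+2 = j+3 by ring] at h
    have hb := lucas_succ_eq j
    have hc : lucas (j+3) = lucas (j+2) + lucas (j+1) := rfl
    have e0 : Nat.fib (j+2) = Nat.fib j + Nat.fib (j+1) := Nat.fib_add_two
    have e1 : Nat.fib (j+3) = Nat.fib (j+2) + Nat.fib (j+1) := by
      rw [show j+3 = (j+1)+2 by ring, Nat.fib_add_two,
        show j+1+1 = j+2 by ring]
      omega
    have e2 : Nat.fib (j+4) = Nat.fib (j+3) + Nat.fib (j+2) := by
      rw [show j+4 = (j+2)+2 by ring, Nat.fib_add_two,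
        show j+2+1 = j+3 by ring]
      omega
    omega

lemma prod_range_cyc : ∀ (m : ℕ) (b : Bool) (v : ℕ → Bool),
    (∏ j ∈ Finset.range (m+1), w (v j) (if j = m then b else v (j+1)))
      = cp (v 0) b m (fun j => v (j+1)) := by
  intro m
  induction m with
  | zero =>
    intro b v
    simp [cp]
  | succ m ih =>
    intro b v
    rw [Finset.prod_range_succ']
    have hstep : (∏ j ∈ Finset.range (m+1), w (v (j+1)) (if j+1 = m+1 then b else v (j+1+1)))
        = cp (v 1) b m (fun j => v (j+2)) := by
      have := ih b (fun j => v (j+1))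
      rw [← this]
      apply Finset.prod_congr rfl
      intro j _
      congr 1
      simp only [Nat.add_right_cancel_iff]
    rw [hstep]
    have h0 : (if 0 = m + 1 then b else v 1) = v 1 := by simp
    rw [h0]
    show _ = w (v 0) (v 1) * cp (v 1) b m (fun j => v (j+2))
    ring

open Fin.NatCast in
lemma cyc_prod_eq (N : ℕ) (s : Fin (N+1) → Bool) :
    (∏ e : Fin (N+1), w (s e) (s (e+1)))
      = cp (s 0) (s 0) N (fun j => s (((j+1 : ℕ) : Fin (N+1)))) := by
  have hv : ∀ e : Fin (N+1), w (s e) (s (e+1)) =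
      (fun j : ℕ => w (s (j : Fin (N+1)))
        (if j = N then s 0 else s ((j+1 : ℕ) : Fin (N+1)))) e.val := by
    intro e
    simp only []
    rw [Fin.cast_val_eq_self e]
    by_cases he : e.val = N
    · rw [if_pos he]
      have : e + 1 = 0 := by
        have : e = Fin.last N := by
          apply Fin.ext
          simpa using he
        rw [this, Fin.last_add_one]
      rw [this]
    · rw [if_neg he]
      congr 1
      have hlt : e.val + 1 < N + 1 := by have := e.isLt; omega
      have : ((e.val + 1 : ℕ) : Fin (N+1)) = e + 1 := by
        push_cast
        rfl
      rw [this]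
  calc (∏ e : Fin (N+1), w (s e) (s (e+1)))
      = ∏ e : Fin (N+1), (fun j : ℕ => w (s (j : Fin (N+1)))
          (if j = N then s 0 else s ((j+1 : ℕ) : Fin (N+1)))) e.val :=
        Finset.prod_congr rfl (fun e _ => hv e)
    _ = ∏ j ∈ Finset.range (N+1), w (s (j : Fin (N+1)))
          (if j = N then s 0 else s ((j+1 : ℕ) : Fin (N+1))) :=
        Fin.prod_univ_eq_prod_range
          (fun j : ℕ => w (s (j : Fin (N+1)))
            (if j = N then s 0 else s ((j+1 : ℕ) : Fin (N+1)))) (N+1)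
    _ = cp (s ((0:ℕ) : Fin (N+1))) (s 0) N (fun j => s ((j+1 : ℕ) : Fin (N+1))) :=
        prod_range_cyc N (s 0) (fun j => s ((j : ℕ) : Fin (N+1)))
    _ = _ := by norm_num

open Fin.NatCast in
lemma main_count (N : ℕ) :
    (∑ s : Fin (N+1) → Bool, ∏ e : Fin (N+1), w (s e) (s (e+1))) = lucas (2*(N+1)) := by
  have step1 : ∀ s : Fin (N+1) → Bool,
      (∏ e : Fin (N+1), w (s e) (s (e+1)))
        = cp (s 0) (s 0) N (ext N (fun j : Fin N => s j.succ)) := by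
    intro s
    rw [cyc_prod_eq]
    apply cp_congr
    intro j hj
    have hj1 : j + 1 < N + 1 := by omega
    simp only [ext, dif_pos hj]
    congr 1
    apply Fin.ext
    rw [Fin.val_natCast, Nat.mod_eq_of_lt hj1]
    simp
  rw [Finset.sum_congr rfl (fun s _ => step1 s)]
  rw [← Equiv.sum_comp (Fin.consEquiv (fun _ : Fin (N+1) => Bool))
    (fun s => cp (s 0) (s 0) N (ext N (fun j : Fin N => s j.succ)))]
  rw [Fintype.sum_prod_type]
  have key : ∀ (c : Bool) (f : Fin N → Bool),
      (fun s : Fin (N+1) → Bool => cp (s 0) (s 0) N (ext N (fun j : Fin N => s j.succ)))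
          ((Fin.consEquiv (fun _ : Fin (N+1) => Bool)) (c, f))
        = cp c c N (ext N f) := by
    intro c f
    show cp ((Fin.cons c f : Fin (N+1) → Bool) 0) ((Fin.cons c f : Fin (N+1) → Bool) 0) N
          (ext N (fun j : Fin N => (Fin.cons c f : Fin (N+1) → Bool) j.succ))
        = cp c c N (ext N f)
    have h1 : (Fin.cons c f : Fin (N+1) → Bool) 0 = c := Fin.cons_zero (α := fun _ => Bool) c f
    have h2 : (fun j : Fin N => (Fin.cons c f : Fin (N+1) → Bool) j.succ) = f := by
      funext j
      exact Fin.cons_succ (α := fun _ => Bool) c f j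
    rw [h1, h2]
  simp_rw [key]
  simp_rw [sum_cp]
  rw [Fintype.sum_bool]
  obtain ⟨h1, h2, h3, h4⟩ := pathSum_fib N
  have h5 : lucas (2*N+2) = Nat.fib (2*N+1) + Nat.fib (2*N+3) := by
    have h := lucas_succ_eq (2*N+1)
    rwa [show 2*N+1+1 = 2*N+2 by ring, show 2*N+1+2 = 2*N+3 by ring] at h
  have e1 : Nat.fib (2*N+3) = Nat.fib (2*N+2) + Nat.fib (2*N+1) := by
    rw [show 2*N+3 = (2*N+1)+2 by ring, Nat.fib_add_two,
      show 2*N+1+1 = 2*N+2 by ring]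
    omega
  rw [show 2*(N+1) = 2*N+2 by ring, h5]
  omega

lemma zmod_count (N : ℕ) :
    (∑ s : ZMod (N+1) → Bool, ∏ e : ZMod (N+1), w (s e) (s (e+1))) = lucas (2*(N+1)) :=
  main_count N

section Count
variable [NeZero n]

def isPos : Option ℕ → Bool
  | some (_+1) => true
  | _ => false

@[simp] lemma isPos_none : isPos none = false := rfl
@[simp] lemma isPos_some_zero : isPos (some 0) = false := rfl
@[simp] lemma isPos_some_succ (k : ℕ) : isPos (some (k+1)) = true := rfl

def stopAt (s v : ZMod n → Bool) (i : ZMod n) (t : ℕ) : Prop :=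
  ¬ (s (i - ((t+1:ℕ) : ZMod n)) = false ∧ s (i - ((t:ℕ) : ZMod n)) = false ∧
     v (i - ((t+1:ℕ) : ZMod n)) = true)

instance (s v : ZMod n → Bool) (i : ZMod n) : DecidablePred (stopAt s v i) := by
  unfold stopAt
  infer_instance

lemma stopAt_exists (s v : ZMod n → Bool) (hex : ∃ j, s j = true) (i : ZMod n) :
    ∃ t, stopAt s v i t := by
  obtain ⟨j, hj⟩ := hex
  refine ⟨(i - 1 - j).val, ?_⟩
  unfold stopAt
  have hcast : i - (((i - 1 - j).val + 1 : ℕ) : ZMod n) = j := by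
    push_cast
    rw [ZMod.natCast_val, ZMod.cast_id]
    ring
  rw [hcast]
  intro hc
  rw [hj] at hc
  exact Bool.noConfusion hc.1

def dd (s v : ZMod n → Bool) (hex : ∃ j, s j = true) (i : ZMod n) : ℕ :=
  Nat.find (stopAt_exists s v hex i)

lemma stopAt_succ_iff (s v : ZMod n → Bool) (i : ZMod n) (t : ℕ) :
    stopAt s v i (t+1) ↔ stopAt s v (i-1) t := by
  unfold stopAt
  have e1 : i - ((t+1+1:ℕ) : ZMod n) = (i-1) - ((t+1:ℕ) : ZMod n) := by push_cast; ring
  have e2 : i - ((t+1:ℕ) : ZMod n) = (i-1) - ((t:ℕ) : ZMod n) := by push_cast; ring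
  rw [e1, e2]

lemma dd_shift (s v : ZMod n → Bool) (hex : ∃ j, s j = true) (i : ZMod n)
    (h0 : ¬ stopAt s v i 0) : dd s v hex i = dd s v hex (i-1) + 1 := by
  rw [dd, Nat.find_eq_iff]
  constructor
  · rw [stopAt_succ_iff]
    exact Nat.find_spec (stopAt_exists s v hex (i-1))
  · intro t ht
    cases t with
    | zero => exact fun hc => h0 hc
    | succ u =>
      rw [stopAt_succ_iff]
      have hu : u < dd s v hex (i-1) := by omega
      exact Nat.find_min (stopAt_exists s v hex (i-1)) hu

lemma dd_zero_iff (s v : ZMod n → Bool) (hex : ∃ j, s j = true) (i : ZMod n) :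
    dd s v hex i = 0 ↔ stopAt s v i 0 := by
  rw [dd, Nat.find_eq_zero]

def sigOf (s v : ZMod n → Bool) (hex : ∃ j, s j = true) : ZMod n → Option ℕ :=
  fun i => if s i = true then none else some (dd s v hex i)

lemma sigOf_none_iff (s v : ZMod n → Bool) (hex : ∃ j, s j = true) (i : ZMod n) :
    sigOf s v hex i = none ↔ s i = true := by
  unfold sigOf
  cases hsi : s i <;> simp

-- membership of sigOf in Sset
lemma sigOf_mem (s v : ZMod n → Bool) (hex : ∃ j, s j = true) (hex' : ∃ j, s j = false)
    (hN : ∀ e, v e = true → s e = false ∧ s (e+1) = false) :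
    sigOf s v hex ∈ Sset n := by
  have hc0 : ∀ i : ZMod n, i - ((0+1 : ℕ) : ZMod n) = i - 1 := by intro i; norm_num
  have hc0' : ∀ i : ZMod n, i - ((0 : ℕ) : ZMod n) = i := by intro i; norm_num
  refine ⟨?_, ?_, ?_⟩
  · intro i k h
    unfold sigOf at h ⊢
    rcases hsi : s i with _ | _
    · rw [hsi] at h
      simp only [Bool.false_eq_true, if_false] at h
      have hdk : dd s v hex i = k + 1 := Option.some_injective _ h
      have h0 : ¬ stopAt s v i 0 := by
        rw [← dd_zero_iff s v hex i] at *
        omega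
      have hstop := not_not.mp h0
      rw [hc0 i, hc0' i] at hstop
      rw [dd_shift s v hex i (by rw [← dd_zero_iff s v hex i] at *; omega)] at hdk
      rw [if_neg (by rw [hstop.1]; simp)]
      exact congrArg some (by omega)
    · rw [hsi] at h
      simp at h
  · obtain ⟨j, hj⟩ := hex'
    refine ⟨j, ?_⟩
    unfold sigOf
    rw [hj]
    simp
  · left
    obtain ⟨j, hj⟩ := hex
    refine ⟨j, ?_⟩
    unfold sigOf
    rw [hj]
    simp

lemma sigOf_roundtrip_s (s v : ZMod n → Bool) (hex : ∃ j, s j = true) (i : ZMod n) :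
    decide (sigOf s v hex i = none) = s i := by
  unfold sigOf
  cases hsi : s i <;> simp

lemma sigOf_roundtrip_v (s v : ZMod n → Bool) (hex : ∃ j, s j = true)
    (hN : ∀ e, v e = true → s e = false ∧ s (e+1) = false) (e : ZMod n) :
    isPos (sigOf s v hex (e+1)) = v e := by
  have hc1 : (e+1) - ((0+1 : ℕ) : ZMod n) = e := by push_cast; ring
  have hc2 : (e+1) - ((0 : ℕ) : ZMod n) = e + 1 := by push_cast; ring
  unfold sigOf
  cases hse : s (e+1) with
  | true =>
    simp only [if_pos, isPos_none]
    cases hve : v e with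
    | false => rfl
    | true =>
      exfalso
      have := (hN e hve).2
      rw [hse] at this
      exact Bool.noConfusion this
  | false =>
    simp only [Bool.false_eq_true, if_false]
    cases hve : v e with
    | true =>
      have h0 : ¬ stopAt s v (e+1) 0 := by
        unfold stopAt
        rw [hc1, hc2]
        intro hc
        exact hc ⟨(hN e hve).1, hse, hve⟩
      have : dd s v hex (e+1) ≠ 0 := fun hc => h0 ((dd_zero_iff s v hex (e+1)).mp hc)
      obtain ⟨u, hu⟩ := Nat.exists_eq_succ_of_ne_zero this
      rw [hu]
      simp
    | false =>
      have h0 : stopAt s v (e+1) 0 := by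
        unfold stopAt
        rw [hc1, hc2]
        intro hc
        rw [hve] at hc
        exact Bool.noConfusion hc.2.2
      have : dd s v hex (e+1) = 0 := by rw [dd_zero_iff]; exact h0
      rw [this]
      simp

lemma sigOf_eq_self {σ : ZMod n → Option ℕ} (hσ : σ ∈ Sset n)
    (hex : ∃ j, decide (σ j = none) = true) :
    sigOf (fun i => decide (σ i = none)) (fun e => isPos (σ (e+1))) hex = σ := by
  funext i
  unfold sigOf
  rcases hsi : σ i with _ | k
  · rw [if_pos (by simp [hsi])]
  · rw [if_neg (by simp [hsi])]
    refine congrArg some ?_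
    rw [dd, Nat.find_eq_iff]
    constructor
    · unfold stopAt
      have hchain := Sset_chain hσ hsi k le_rfl
      have hcast : i - ((k+1 : ℕ) : ZMod n) + 1 = i - ((k : ℕ) : ZMod n) := by
        push_cast; ring
      rw [Nat.sub_self] at hchain
      intro hc
      have hv := hc.2.2
      dsimp only at hv
      rw [hcast, hchain] at hv
      simp at hv
    · intro t ht
      unfold stopAt
      rw [not_not]
      have hch1 : σ (i - ((t+1 : ℕ) : ZMod n)) = some (k - (t+1)) :=
        Sset_chain hσ hsi (t+1) (by omega)
      have hch2 : σ (i - ((t : ℕ) : ZMod n)) = some (k - t) :=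
        Sset_chain hσ hsi t (by omega)
      have hcast : i - ((t+1 : ℕ) : ZMod n) + 1 = i - ((t : ℕ) : ZMod n) := by
        push_cast; ring
      have hq1 : (fun i => decide (σ i = none)) (i - ((t+1:ℕ) : ZMod n)) = false := by
        dsimp only
        rw [hch1]
        simp
      have hq2 : (fun i => decide (σ i = none)) (i - ((t:ℕ) : ZMod n)) = false := by
        dsimp only
        rw [hch2]
        simp
      have hq3 : (fun e => isPos (σ (e+1))) (i - ((t+1:ℕ) : ZMod n)) = true := by
        dsimp only
        rw [hcast, hch2, show k - t = (k - t - 1) + 1 by omega]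
        simp
      exact ⟨hq1, hq2, hq3⟩

end Count

lemma isPos_true_iff (o : Option ℕ) : isPos o = true ↔ ∃ k, o = some (k+1) := by
  rcases o with _ | k
  · simp
  · cases k with
    | zero => simp
    | succ u => simp

def PairsT (n : ℕ) : Type :=
  {p : (ZMod n → Bool) × (ZMod n → Bool) //
    ((∃ i, p.1 i = true) ∧ (∃ i, p.1 i = false)) ∧
    ∀ e, p.2 e = true → (p.1 e = false ∧ p.1 (e+1) = false)}

section Count2
variable [NeZero n]

instance : Finite (PairsT n) := by
  unfold PairsT
  infer_instance

noncomputable def equivPairs : ↥(Sset n \ {fun _ => some 0}) ≃ PairsT n where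
  toFun := fun ⟨σ, hσ⟩ => by
    refine ⟨(fun i => decide (σ i = none), fun e => isPos (σ (e+1))), ⟨⟨?_, ?_⟩, ?_⟩⟩
    · have hne : σ ≠ (fun _ => some 0) := fun hc => hσ.2 hc
      rcases hσ.1.2.2 with ⟨j, hj⟩ | hconst
      · exact ⟨j, by simp [hj]⟩
      · exact absurd hconst hne
    · obtain ⟨j, hj⟩ := hσ.1.2.1
      exact ⟨j, by simp [hj]⟩
    · intro e he
      dsimp only at he
      obtain ⟨k, hk⟩ := (isPos_true_iff _).mp he
      have h1 := hσ.1.1 (e+1) k hk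
      rw [add_sub_cancel_right] at h1
      exact ⟨by simp [h1], by simp [hk]⟩
  invFun := fun ⟨⟨s, v⟩, hp⟩ => by
    refine ⟨sigOf s v hp.1.1, ?_, ?_⟩
    · exact sigOf_mem s v hp.1.1 hp.1.2 hp.2
    · intro hc
      obtain ⟨j, hj⟩ := hp.1.1
      have h1 : sigOf s v hp.1.1 j = none := (sigOf_none_iff s v hp.1.1 j).mpr hj
      have h2 : sigOf s v hp.1.1 = (fun _ => some 0) := hc
      rw [h2] at h1
      simp at h1
  left_inv := fun ⟨σ, hσ⟩ => by
    apply Subtype.ext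
    apply sigOf_eq_self hσ.1
  right_inv := fun ⟨⟨s, v⟩, hp⟩ => by
    apply Subtype.ext
    apply Prod.ext
    · funext i
      exact sigOf_roundtrip_s s v hp.1.1 i
    · funext e
      exact sigOf_roundtrip_v s v hp.1.1 hp.2 e

def pairsSigma : PairsT n ≃
    Σ s : {s : ZMod n → Bool // (∃ i, s i = true) ∧ (∃ i, s i = false)},
      ({e : ZMod n // s.1 e = false ∧ s.1 (e+1) = false} → Bool) where
  toFun p := ⟨⟨p.1.1, p.2.1⟩, fun e => p.1.2 e.1⟩
  invFun q := ⟨(q.1.1, fun e => if h : (q.1.1 e = false ∧ q.1.1 (e+1) = false)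
      then q.2 ⟨e, h⟩ else false), ⟨q.1.2, by
    intro e he
    dsimp only at he
    by_cases h : (q.1.1 e = false ∧ q.1.1 (e+1) = false)
    · exact h
    · rw [dif_neg h] at he
      exact Bool.noConfusion he⟩⟩
  left_inv p := by
    apply Subtype.ext
    apply Prod.ext
    · rfl
    · funext e
      dsimp only
      by_cases h : (p.1.1 e = false ∧ p.1.1 (e+1) = false)
      · rw [dif_pos h]
      · rw [dif_neg h]
        cases hve : p.1.2 e with
        | false => rfl
        | true => exact absurd (p.2.2 e hve) h
  right_inv q := by
    refine Sigma.ext rfl (heq_of_eq ?_)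
    funext e
    exact dif_pos e.2

lemma pow_card_eq_prod_w (s : ZMod n → Bool) :
    2 ^ (Finset.univ.filter (fun e : ZMod n => s e = false ∧ s (e+1) = false)).card
      = ∏ e : ZMod n, w (s e) (s (e+1)) := by
  unfold w
  rw [Finset.prod_ite, Finset.prod_const, Finset.prod_const, one_pow, mul_one]

lemma card_PairsT_eq :
    Nat.card (PairsT n) + 1 + 2^n
      = ∑ s : ZMod n → Bool, ∏ e : ZMod n, w (s e) (s (e+1)) := by
  classical
  have h1 : Nat.card (PairsT n) =
      ∑ s : {s : ZMod n → Bool // (∃ i, s i = true) ∧ (∃ i, s i = false)},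
        2 ^ (Finset.univ.filter (fun e : ZMod n => s.1 e = false ∧ s.1 (e+1) = false)).card := by
    rw [Nat.card_congr (pairsSigma (n := n)), Nat.card_eq_fintype_card, Fintype.card_sigma]
    apply Finset.sum_congr rfl
    intro s _
    rw [Fintype.card_fun, Fintype.card_subtype]
    simp
  rw [h1]
  have h2 : ∀ P : (ZMod n → Bool) → Prop, ∀ _inst : DecidablePred P,
      (∑ s : {s : ZMod n → Bool // P s},
        2 ^ (Finset.univ.filter (fun e : ZMod n => s.1 e = false ∧ s.1 (e+1) = false)).card)
      = ∑ s ∈ Finset.univ.filter P,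
        2 ^ (Finset.univ.filter (fun e : ZMod n => s e = false ∧ s (e+1) = false)).card := by
    intro P inst
    exact (Finset.sum_subtype (Finset.univ.filter P) (fun x => by simp)
      (fun s => 2 ^ (Finset.univ.filter
        (fun e : ZMod n => s e = false ∧ s (e+1) = false)).card)).symm
  rw [h2 _ _]
  have hsplit := Finset.sum_filter_add_sum_filter_not Finset.univ
    (fun s : ZMod n → Bool => (∃ i, s i = true) ∧ (∃ i, s i = false))
    (fun s => 2 ^ (Finset.univ.filter (fun e : ZMod n => s e = false ∧ s (e+1) = false)).card)
  have hnotfilter : Finset.univ.filter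
      (fun s : ZMod n → Bool => ¬((∃ i, s i = true) ∧ (∃ i, s i = false)))
      = {fun _ => true, fun _ => false} := by
    ext s
    simp only [Finset.mem_filter, Finset.mem_univ, true_and, Finset.mem_insert,
      Finset.mem_singleton]
    constructor
    · intro h
      rcases not_and_or.mp h with h | h
      · push_neg at h
        right
        funext i
        simpa using h i
      · push_neg at h
        left
        funext i
        simpa using h i
    · rintro (rfl | rfl)
      · rintro ⟨-, ⟨i, hi⟩⟩
        exact Bool.noConfusion hi
      · rintro ⟨⟨i, hi⟩, -⟩
        exact Bool.noConfusion hi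
  have hpairsum : ∑ s ∈ ({fun _ => true, fun _ => false} :
        Finset (ZMod n → Bool)),
        2 ^ (Finset.univ.filter (fun e : ZMod n => s e = false ∧ s (e+1) = false)).card
      = 1 + 2^n := by
    rw [Finset.sum_pair (by
      intro hc
      have := congrFun hc 0
      exact Bool.noConfusion this)]
    congr 1
    · simp
    · have : (Finset.univ.filter (fun e : ZMod n =>
          (fun _ => false : ZMod n → Bool) e = false ∧
          (fun _ => false : ZMod n → Bool) (e+1) = false)) = Finset.univ := by
        simp
      rw [this, Finset.card_univ, ZMod.card]
  calc (∑ s ∈ Finset.univ.filter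
        (fun s : ZMod n → Bool => (∃ i, s i = true) ∧ (∃ i, s i = false)),
        2 ^ (Finset.univ.filter (fun e : ZMod n => s e = false ∧ s (e+1) = false)).card) + 1 + 2^n
      = (∑ s ∈ Finset.univ.filter
          (fun s : ZMod n → Bool => (∃ i, s i = true) ∧ (∃ i, s i = false)),
          2 ^ (Finset.univ.filter (fun e : ZMod n => s e = false ∧ s (e+1) = false)).card)
        + ∑ s ∈ Finset.univ.filter
          (fun s : ZMod n → Bool => ¬((∃ i, s i = true) ∧ (∃ i, s i = false))),
          2 ^ (Finset.univ.filter (fun e : ZMod n => s e = false ∧ s (e+1) = false)).card := by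
        rw [hnotfilter, hpairsum]
        ring
    _ = ∑ s : ZMod n → Bool,
          2 ^ (Finset.univ.filter (fun e : ZMod n => s e = false ∧ s (e+1) = false)).card :=
        hsplit
    _ = ∑ s : ZMod n → Bool, ∏ e : ZMod n, w (s e) (s (e+1)) := by
        apply Finset.sum_congr rfl
        intro s _
        exact pow_card_eq_prod_w s

end Count2

lemma const_zero_mem : (fun _ => some 0 : ZMod n → Option ℕ) ∈ Sset n := by
  refine ⟨?_, ⟨0, by simp⟩, Or.inr rfl⟩
  intro i k h
  exact absurd (Option.some_injective _ h) (by omega)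

lemma Sset_ncard [NeZero n] (hn1 : 1 ≤ n) :
    (Sset n).ncard + 2^n = lucas (2*n) := by
  obtain ⟨N, rfl⟩ : ∃ N, n = N + 1 := ⟨n - 1, by omega⟩
  set c0 : ZMod (N+1) → Option ℕ := (fun _ => some 0) with hc0
  have hfin1 : Finite ↥(Sset (N+1) \ {c0}) := Finite.of_equiv _ (equivPairs (n := N+1)).symm
  have hfin : (Sset (N+1) \ {c0}).Finite := Set.finite_coe_iff.mp hfin1
  have hmem : c0 ∈ Sset (N+1) := const_zero_mem
  have h1 : (Sset (N+1)).ncard = (Sset (N+1) \ {c0}).ncard + 1 := by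
    have he : Sset (N+1) = insert c0 (Sset (N+1) \ {c0}) := by
      rw [Set.insert_diff_singleton, Set.insert_eq_of_mem hmem]
    nth_rewrite 1 [he]
    rw [Set.ncard_insert_of_notMem (fun hc => hc.2 rfl) hfin]
  have h2 : (Sset (N+1) \ {c0}).ncard = Nat.card (PairsT (N+1)) :=
    (Nat.card_coe_set_eq _).symm.trans (Nat.card_congr (equivPairs (n := N+1)))
  have h3 := card_PairsT_eq (n := N+1)
  have h4 : (∑ s : ZMod (N+1) → Bool, ∏ e : ZMod (N+1), w (s e) (s (e+1)))
      = lucas (2*(N+1)) := zmod_count N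
  rw [h1, h2, ← h4, ← h3]

lemma main_set_eq [NeZero n] (hn5 : 5 ≤ n) :
    {g | ∃ τ : ZMod n → ℕ, g = ecaAsync n rule8 τ} = G n '' Sset n := by
  ext g
  constructor
  · rintro ⟨τ, rfl⟩
    refine ⟨Phi n τ, phi_mem_Sset τ, ?_⟩
    funext x i
    exact (async_eq_G τ x i).symm
  · rintro ⟨σ, hσ, rfl⟩
    obtain ⟨τ, hτ⟩ := exists_tau hn5 hσ
    refine ⟨τ, ?_⟩
    funext x i
    rw [async_eq_G τ x i, hτ]

noncomputable def phr : ℝ := (1 + Real.sqrt 5) / 2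

noncomputable def psr : ℝ := (1 - Real.sqrt 5) / 2

lemma sq5 : Real.sqrt 5 ^ 2 = 5 := Real.sq_sqrt (by norm_num)

lemma lucas_real : ∀ j, (lucas j : ℝ) = phr ^ j + psr ^ j
  | 0 => by norm_num [lucas]
  | 1 => by
    rw [pow_one, pow_one]
    unfold phr psr
    norm_num [lucas]
  | (j+2) => by
    have hφ : phr ^ 2 = phr + 1 := by
      unfold phr
      linear_combination sq5 / 4
    have hψ : psr ^ 2 = psr + 1 := by
      unfold psr
      linear_combination sq5 / 4
    have ha := lucas_real (j+1)
    have hb := lucas_real j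
    have hc : (lucas (j+2) : ℝ) = (lucas (j+1) : ℝ) + (lucas j : ℝ) := by
      rw [show lucas (j+2) = lucas (j+1) + lucas j from rfl]
      push_cast
      ring
    have e1 : phr^(j+2) = phr^(j+1) + phr^j := by
      calc phr^(j+2) = phr^j * phr^2 := by ring
        _ = phr^j * (phr + 1) := by rw [hφ]
        _ = phr^(j+1) + phr^j := by ring
    have e2 : psr^(j+2) = psr^(j+1) + psr^j := by
      calc psr^(j+2) = psr^j * psr^2 := by ring
        _ = psr^j * (psr + 1) := by rw [hψ]
        _ = psr^(j+1) + psr^j := by ring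
    rw [hc, ha, hb, e1, e2]
    ring

lemma inv_phr : phr⁻¹ = -psr := by
  refine inv_eq_of_mul_eq_one_right ?_
  unfold phr psr
  linear_combination sq5 / 4

end R8

/-- Rule 8 (h a b c = ¬a ∧ b ∧ c): the number of distinct asynchronous global
functions equals $L(2n) - 2^n$, equivalently $φ^{2n} + φ^{-2n} - 2^n$ where
$φ$ is the golden ratio. -/


theorem rule_8_count (n : ℕ) (hn : 5 ≤ n) :
    {g | ∃ τ : ZMod n → ℕ, g = ecaAsync n (fun a b c => !a && b && c) τ}.ncard
        = lucas (2 * n) - 2 ^ n ∧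
    ({g | ∃ τ : ZMod n → ℕ, g = ecaAsync n (fun a b c => !a && b && c) τ}.ncard : ℝ)
        = ((1 + Real.sqrt 5) / 2) ^ (2 * n)
          + (((1 + Real.sqrt 5) / 2)⁻¹) ^ (2 * n) - 2 ^ n := by
  haveI : NeZero n := ⟨by omega⟩
  have hset : {g | ∃ τ : ZMod n → ℕ, g = ecaAsync n (fun a b c => !a && b && c) τ}
      = R8.G n '' R8.Sset n := R8.main_set_eq hn
  have hcard : {g | ∃ τ : ZMod n → ℕ, g = ecaAsync n (fun a b c => !a && b && c) τ}.ncard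
      = (R8.Sset n).ncard := by
    rw [hset]
    exact Set.ncard_image_of_injOn (R8.G_injOn hn)
  have hkey : (R8.Sset n).ncard + 2^n = lucas (2*n) := R8.Sset_ncard (by omega)
  constructor
  · omega
  · rw [hcard]
    have hcast : ((R8.Sset n).ncard : ℝ) = (lucas (2*n) : ℝ) - 2^n := by
      have := congrArg (fun m : ℕ => (m : ℝ)) hkey
      push_cast at this
      linarith
    rw [hcast, R8.lucas_real (2*n)]
    show (R8.phr : ℝ)^(2*n) + R8.psr^(2*n) - 2^n = R8.phr^(2*n) + (R8.phr⁻¹)^(2*n) - 2^n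
    rw [R8.inv_phr]
    rw [Even.neg_pow ⟨n, by ring⟩]
end

section
/- For every n ≥ 1: the sum, over all cyclic Boolean words u : ℤ/nℤ → Bool, of 2^{p(u) − q(u)}, where p(u) = #{ i ∈ ℤ/nℤ : u_i = true } and q(u) = #{ i ∈ ℤ/nℤ : u_i = true and u_{i+1} = false } (note q(u) ≤ p(u) always), equals L(2n), the 2n-th Lucas number; equivalently it equals φ^{2n} + φ^{−2n} with φ = (1+√5)/2 the golden ratio. -/
namespace SWEL

/-- transfer-matrix weight -/
def w (a b : Bool) : ℕ := if a && b then 2 else 1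

/-- weighted path count from `a` to `b` in `k` steps -/
def P : ℕ → Bool → Bool → ℕ
  | 0, a, b => if a = b then 1 else 0
  | k + 1, a, b => w a false * P k false b + w a true * P k true b

lemma chain (k : ℕ) (F : Bool → Bool → ℕ) :
    ∑ u : Fin (k + 1) → Bool,
      (∏ i : Fin k, w (u i.castSucc) (u i.succ)) * F (u 0) (u (Fin.last k))
    = ∑ a : Bool, ∑ b : Bool, P k a b * F a b := by
  induction k generalizing F with
  | zero =>
    rw [← (Equiv.funUnique (Fin 1) Bool).symm.sum_comp]
    simp [P, Fin.last]
  | succ k ih =>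
    rw [← ((Fin.consEquiv (fun _ : Fin (k + 2) => Bool)).sum_comp
      (fun u => (∏ i : Fin (k + 1), w (u i.castSucc) (u i.succ))
          * F (u 0) (u (Fin.last (k + 1))))), Fintype.sum_prod_type]
    have key : ∀ a : Bool, ∀ v : Fin (k + 1) → Bool,
        (∏ i : Fin (k + 1), w ((Fin.cons a v : Fin (k+2) → Bool) i.castSucc)
            ((Fin.cons a v : Fin (k+2) → Bool) i.succ))
          * F ((Fin.cons a v : Fin (k+2) → Bool) 0)
              ((Fin.cons a v : Fin (k+2) → Bool) (Fin.last (k + 1)))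
        = (∏ i : Fin k, w (v i.castSucc) (v i.succ))
            * (w a (v 0) * F a (v (Fin.last k))) := by
      intro a v
      rw [Fin.prod_univ_succ]
      simp only [Fin.castSucc_zero, Fin.cons_zero, Fin.cons_succ, Fin.succ_castSucc,
        ← Fin.succ_last, Fin.cons_succ]
      simp only [← Fin.succ_castSucc, Fin.cons_succ]
      ring
    calc ∑ a : Bool, ∑ v : Fin (k + 1) → Bool,
          (∏ i : Fin (k + 1), w ((Fin.consEquiv (fun _ : Fin (k+2) => Bool)) (a, v) i.castSucc)
            ((Fin.consEquiv (fun _ : Fin (k+2) => Bool)) (a, v) i.succ))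
          * F ((Fin.consEquiv (fun _ : Fin (k+2) => Bool)) (a, v) 0)
              ((Fin.consEquiv (fun _ : Fin (k+2) => Bool)) (a, v) (Fin.last (k + 1)))
        = ∑ a : Bool, ∑ v : Fin (k + 1) → Bool,
            (∏ i : Fin k, w (v i.castSucc) (v i.succ))
              * (w a (v 0) * F a (v (Fin.last k))) := by
          exact Finset.sum_congr rfl fun a _ => Finset.sum_congr rfl fun v _ => key a v
      _ = ∑ a : Bool, ∑ c : Bool, ∑ b : Bool, P k c b * (w a c * F a b) := by
          exact Finset.sum_congr rfl fun a _ => ih (fun x y => w a x * F a y)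
      _ = ∑ a : Bool, ∑ b : Bool, P (k + 1) a b * F a b := by
          simp only [Fintype.sum_bool, P]
          ring

lemma cyc (m : ℕ) :
    ∑ u : Fin (m + 1) → Bool, ∏ i : Fin (m + 1), w (u i) (u (i + 1))
    = P (m + 1) false false + P (m + 1) true true := by
  have h1 : ∀ u : Fin (m + 1) → Bool,
      (∏ i : Fin (m + 1), w (u i) (u (i + 1)))
      = (∏ i : Fin m, w (u i.castSucc) (u i.succ)) * w (u (Fin.last m)) (u 0) := by
    intro u
    rw [Fin.prod_univ_castSucc]
    simp only [Fin.coeSucc_eq_succ, Fin.last_add_one]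
  rw [Finset.sum_congr rfl fun u _ => h1 u, chain m (fun a b => w b a)]
  simp only [Fintype.sum_bool, P]
  ring

lemma traceRec (k : ℕ) :
    P (k + 2) false false + P (k + 2) true true + (P k false false + P k true true)
    = 3 * (P (k + 1) false false + P (k + 1) true true) := by
  simp only [P, w]
  norm_num
  ring

lemma lucasRec (m : ℕ) : lucas (m + 4) + lucas m = 3 * lucas (m + 2) := by
  show lucas (m + 2 + 2) + lucas m = 3 * lucas (m + 1 + 1)
  rw [lucas, lucas, lucas]
  omega

lemma traceEq (k : ℕ) : P k false false + P k true true = lucas (2 * k) := by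
  suffices H : ∀ k, P k false false + P k true true = lucas (2 * k) ∧
      P (k + 1) false false + P (k + 1) true true = lucas (2 * (k + 1)) from (H k).1
  intro k
  induction k with
  | zero => exact ⟨by simp [P, lucas], by simp [P, w, lucas]⟩
  | succ k ih =>
    refine ⟨ih.2, ?_⟩
    have h1 := traceRec k
    have h2 := lucasRec (2 * k)
    have e1 : 2 * (k + 1) = 2 * k + 2 := by ring
    have e2 : 2 * (k + 1 + 1) = 2 * k + 4 := by ring
    rw [e2]
    rw [e1] at ih
    show P (k + 2) false false + P (k + 2) true true = lucas (2 * k + 4)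
    omega

lemma step {α : Type*} [Fintype α] [DecidableEq α] (f : α → α) (u : α → Bool) :
    2 ^ ((Finset.univ.filter (fun i : α => u i = true)).card
      - (Finset.univ.filter (fun i : α => u i = true ∧ u (f i) = false)).card)
    = ∏ i : α, w (u i) (u (f i)) := by
  have h := Finset.card_filter_add_card_filter_not
      (s := Finset.univ.filter (fun i : α => u i = true))
      (p := fun i => u (f i) = false)
  rw [Finset.filter_filter, Finset.filter_filter] at h
  simp only [Bool.not_eq_false] at h
  have hcard : (Finset.univ.filter (fun i : α => u i = true)).card
      - (Finset.univ.filter (fun i : α => u i = true ∧ u (f i) = false)).card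
      = (Finset.univ.filter (fun i : α => u i = true ∧ u (f i) = true)).card := by omega
  rw [hcard]
  have hw : ∀ i : α, w (u i) (u (f i))
      = if (u i = true ∧ u (f i) = true) then 2 else 1 := by
    intro i; cases h1 : u i <;> cases h2 : u (f i) <;> simp [w]
  rw [Finset.prod_congr rfl fun i _ => hw i, Finset.prod_ite, Finset.prod_const,
    Finset.prod_const, one_pow, mul_one]

open goldenRatio in
lemma lucas_real (k : ℕ) : (lucas k : ℝ) = φ ^ k + ψ ^ k := by
  suffices H : ∀ k, ((lucas k : ℝ) = φ ^ k + ψ ^ k) ∧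
      ((lucas (k + 1) : ℝ) = φ ^ (k + 1) + ψ ^ (k + 1)) from (H k).1
  intro k
  induction k with
  | zero => constructor <;> simp [lucas] <;> ring
  | succ k ih =>
    refine ⟨ih.2, ?_⟩
    show (lucas (k + 2) : ℝ) = _
    rw [lucas]
    push_cast
    rw [ih.1, ih.2]
    have h1 : φ ^ (k + 2) = φ ^ k * (φ + 1) := by rw [← Real.goldenRatio_sq]; ring
    have h2 : ψ ^ (k + 2) = ψ ^ k * (ψ + 1) := by rw [← Real.goldenConj_sq]; ring
    rw [h1, h2]
    ring

open goldenRatio in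
lemma lucas_real' (n : ℕ) : (lucas (2 * n) : ℝ) = φ ^ (2 * n) + (φ⁻¹) ^ (2 * n) := by
  rw [lucas_real, Real.inv_goldenRatio]
  rw [(Even.neg_pow (by exact ⟨n, by ring⟩) ψ : (-ψ) ^ (2*n) = ψ ^ (2*n)).symm]

end SWEL

/-- The sum over all cyclic Boolean words $u$ of length $n$ of
$2^{p(u) - q(u)}$, where $p(u)$ counts  positions and $q(u)$ counts
positions with $u_i = $  and $u_{i+1} = $ , equals the Lucas
number $L(2n)$, equivalently $φ^{2n} + φ^{-2n}$. -/
theorem sum_words_eq_lucas (n : ℕ) [NeZero n] :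
    (∑ u : ZMod n → Bool,
        2 ^ ((Finset.univ.filter (fun i : ZMod n => u i = true)).card
          - (Finset.univ.filter (fun i : ZMod n => u i = true ∧ u (i + 1) = false)).card))
      = lucas (2 * n) ∧
    ((∑ u : ZMod n → Bool,
        2 ^ ((Finset.univ.filter (fun i : ZMod n => u i = true)).card
          - (Finset.univ.filter (fun i : ZMod n => u i = true ∧ u (i + 1) = false)).card)
        : ℕ) : ℝ)
      = ((1 + Real.sqrt 5) / 2) ^ (2 * n) + (((1 + Real.sqrt 5) / 2)⁻¹) ^ (2 * n) := by
  have key : (∑ u : ZMod n → Bool,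
      2 ^ ((Finset.univ.filter (fun i : ZMod n => u i = true)).card
        - (Finset.univ.filter (fun i : ZMod n => u i = true ∧ u (i + 1) = false)).card))
      = lucas (2 * n) := by
    obtain ⟨m, rfl⟩ : ∃ m, n = m + 1 := Nat.exists_eq_succ_of_ne_zero (NeZero.ne n)
    have h1 : (∑ u : ZMod (m + 1) → Bool,
        2 ^ ((Finset.univ.filter (fun i : ZMod (m + 1) => u i = true)).card
          - (Finset.univ.filter
              (fun i : ZMod (m + 1) => u i = true ∧ u (i + 1) = false)).card))
        = ∑ u : ZMod (m + 1) → Bool, ∏ i : ZMod (m + 1), SWEL.w (u i) (u (i + 1)) :=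
      Finset.sum_congr rfl fun u _ => SWEL.step (fun i => i + 1) u
    rw [h1]
    have h2 : (∑ u : ZMod (m + 1) → Bool, ∏ i : ZMod (m + 1), SWEL.w (u i) (u (i + 1)))
        = ∑ u : Fin (m + 1) → Bool, ∏ i : Fin (m + 1), SWEL.w (u i) (u (i + 1)) := rfl
    rw [h2, SWEL.cyc m, SWEL.traceEq (m + 1)]
  refine ⟨key, ?_⟩
  rw [key]
  exact SWEL.lucas_real' n
end
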